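/- arXiv:1506.06325 — 5 statements merged into one kernel-verified Lean document; each statement's English description precedes it below -/
import Mathlib

section
/- Let n be a positive integer and let 0 < a_1, a_2, ..., a_n ≤ 1 be real numbers. Set α = (∑_{j=1}^n a_j/(1 − log₂ a_j)) − 2·ln 2. Then for every real number μ with 0 < μ ≤ 1 − exp(−α/8), there exists a Boolean function f : {0,1}^n → {0,1} such that μ ≤ E[f(x)] ≤ (3/4)·μ + 1/4 (expectation over a uniformly random x ∈ {0,1}^n) and Inf_j[f] < a_j for every 1 ≤ j ≤ n. -/
/-- The vector `x` with the `j`-th coordinate flipped. -/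
def flipCoord (n : ℕ) (j : Fin n) (x : Fin n → Bool) : Fin n → Bool :=
  Function.update x j (!x j)

/-- The expectation `E[f(x)]` of a Boolean function (valued in {0,1})
over a uniformly random `x ∈ {0,1}^n`; this equals `Pr[f(x) = 1]`. -/
noncomputable def expectation (n : ℕ) (f : (Fin n → Bool) → Bool) : ℝ :=
  ((Finset.univ.filter fun x : Fin n → Bool => f x = true).card : ℝ) / 2 ^ n

/-- The influence `Inf_j[f] = Pr[f(x) ≠ f(x^j)]` of the `j`-th variable on `f`,
for a uniformly random `x ∈ {0,1}^n`. -/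
noncomputable def influence (n : ℕ) (f : (Fin n → Bool) → Bool) (j : Fin n) : ℝ :=
  ((Finset.univ.filter fun x : Fin n → Bool => f x ≠ f (flipCoord n j x)).card : ℝ) / 2 ^ n

open Finset
section CT
variable {n : ℕ}
lemma flip_apply_self (j : Fin n) (x : Fin n → Bool) : flipCoord n j x j = !x j := by
  simp [flipCoord]

lemma flip_apply_ne (j i : Fin n) (x : Fin n → Bool) (h : i ≠ j) : flipCoord n j x i = x i := by
  simp [flipCoord, Function.update_of_ne h]

lemma flipCoord_flip_flip (j : Fin n) (x : Fin n → Bool) : flipCoord n j (flipCoord n j x) = x := by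
  funext i
  rcases eq_or_ne i j with rfl | h
  · simp [flip_apply_self]
  · simp [flip_apply_ne _ _ _ h]

lemma card_split (Q : (Fin n → Bool) → Prop) [DecidablePred Q] (i : Fin n)
    (hQ : ∀ x, Q (flipCoord n i x) ↔ Q x) :
    (univ.filter fun x => Q x ∧ x i = true).card * 2 = (univ.filter Q).card := by
  classical
  have hsplit := Finset.card_filter_add_card_filter_not
    (s := univ.filter Q) (p := fun x : Fin n → Bool => x i = true)
  rw [Finset.filter_filter, Finset.filter_filter] at hsplit
  have hbij : (univ.filter fun x => Q x ∧ x i = true).card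
      = (univ.filter fun x => Q x ∧ ¬ x i = true).card := by
    apply Finset.card_bij (fun x _ => flipCoord n i x)
    · intro x hx
      simp only [Finset.mem_filter, Finset.mem_univ, true_and] at hx ⊢
      exact ⟨(hQ x).2 hx.1, by simp [flip_apply_self, hx.2]⟩
    · intro x hx y hy hxy
      have := congrArg (flipCoord n i) hxy
      rwa [flipCoord_flip_flip, flipCoord_flip_flip] at this
    · intro y hy
      refine ⟨flipCoord n i y, ?_, flipCoord_flip_flip i y⟩
      simp only [Finset.mem_filter, Finset.mem_univ, true_and] at hy ⊢
      refine ⟨(hQ y).2 hy.1, ?_⟩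
      simp only [flip_apply_self]
      revert hy
      cases y i <;> simp
  rw [mul_two]
  nth_rewrite 2 [hbij]
  exact hsplit

lemma card_ones (s : Finset (Fin n)) (Q : (Fin n → Bool) → Prop) [DecidablePred Q]
    (hQ : ∀ i ∈ s, ∀ x, Q (flipCoord n i x) ↔ Q x) :
    (univ.filter fun x => Q x ∧ ∀ i ∈ s, x i = true).card * 2 ^ s.card
      = (univ.filter Q).card := by
  classical
  induction s using Finset.induction_on with
  | empty => simp
  | @insert a s ha ih =>
    have h1 : (univ.filter fun x => Q x ∧ ∀ i ∈ insert a s, x i = true)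
        = (univ.filter fun x => (Q x ∧ ∀ i ∈ s, x i = true) ∧ x a = true) := by
      apply Finset.filter_congr
      intro x _
      simp only [Finset.mem_insert]
      constructor
      · rintro ⟨hq, h⟩; exact ⟨⟨hq, fun i hi => h i (Or.inr hi)⟩, h a (Or.inl rfl)⟩
      · rintro ⟨⟨hq, h⟩, h2⟩; exact ⟨hq, fun i hi => hi.elim (fun e => e ▸ h2) (h i)⟩
    have h2 := card_split (fun x => Q x ∧ ∀ i ∈ s, x i = true) a ?_
    · rw [Finset.card_insert_of_notMem ha, h1, pow_succ]
      rw [← mul_assoc, show (univ.filter fun x => (Q x ∧ ∀ i ∈ s, x i = true) ∧ x a = true).card * 2 ^ s.card * 2 = (univ.filter fun x => (Q x ∧ ∀ i ∈ s, x i = true) ∧ x a = true).card * 2 * 2 ^ s.card by ring, h2]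
      exact ih (fun i hi x => hQ i (Finset.mem_insert_of_mem hi) x)
    · intro x
      constructor
      · rintro ⟨hq, h⟩
        refine ⟨(hQ a (Finset.mem_insert_self a s) x).1 hq, fun i hi => ?_⟩
        have := h i hi
        rwa [flip_apply_ne a i x (fun e => ha (e ▸ hi))] at this
      · rintro ⟨hq, h⟩
        refine ⟨(hQ a (Finset.mem_insert_self a s) x).2 hq, fun i hi => ?_⟩
        rw [flip_apply_ne a i x (fun e => ha (e ▸ hi))]
        exact h i hi

lemma card_blocks (P : List (Finset (Fin n))) (hd : P.Pairwise Disjoint) :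
    (univ.filter fun x : Fin n → Bool => ∀ B ∈ P, ∃ j ∈ B, x j = false).card
        * 2 ^ (P.map Finset.card).sum
      = (P.map fun B => 2 ^ B.card - 1).prod * 2 ^ n := by
  classical
  induction P with
  | nil =>
    simp only [List.map_nil, List.sum_nil, List.prod_nil, pow_zero, mul_one, one_mul]
    have : (univ.filter fun x : Fin n → Bool => ∀ B ∈ ([] : List (Finset (Fin n))), ∃ j ∈ B, x j = false) = univ := by
      apply Finset.filter_true_of_mem; intro x _; simp
    rw [this, Finset.card_univ, Fintype.card_fun, Fintype.card_bool, Fintype.card_fin]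
  | cons B R ih =>
    have hBR : ∀ C ∈ R, Disjoint B C := fun C hC => (List.pairwise_cons.1 hd).1 C hC
    have hdR : R.Pairwise Disjoint := (List.pairwise_cons.1 hd).2
    set QR : (Fin n → Bool) → Prop := fun x => ∀ C ∈ R, ∃ j ∈ C, x j = false with hQR
    have hinv : ∀ i ∈ B, ∀ x, QR (flipCoord n i x) ↔ QR x := by
      intro i hi x
      have key : ∀ C ∈ R, ∀ j ∈ C, flipCoord n i x j = x j := by
        intro C hC j hj
        refine flip_apply_ne i j x (fun e => ?_)
        subst e
        exact (Finset.disjoint_left.1 (hBR C hC)) hi hj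
      constructor
      · intro h C hC
        obtain ⟨j, hj, hv⟩ := h C hC
        exact ⟨j, hj, by rw [← key C hC j hj]; exact hv⟩
      · intro h C hC
        obtain ⟨j, hj, hv⟩ := h C hC
        exact ⟨j, hj, by rw [key C hC j hj]; exact hv⟩
    have hones := card_ones B QR hinv
    -- split filter QR by whether all-ones on B
    have hsplit := Finset.card_filter_add_card_filter_not
      (s := univ.filter QR) (p := fun x : Fin n → Bool => ∀ i ∈ B, x i = true)
    rw [Finset.filter_filter, Finset.filter_filter] at hsplit
    -- target set equals QR ∧ ¬ all-ones
    have htgt : (univ.filter fun x : Fin n → Bool => ∀ C ∈ B :: R, ∃ j ∈ C, x j = false)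
        = univ.filter fun x => QR x ∧ ¬ ∀ i ∈ B, x i = true := by
      apply Finset.filter_congr
      intro x _
      simp only [List.mem_cons, hQR]
      constructor
      · intro h
        refine ⟨fun C hC => h C (Or.inr hC), ?_⟩
        obtain ⟨j, hj, hv⟩ := h B (Or.inl rfl)
        intro hall
        rw [hall j hj] at hv; simp at hv
      · rintro ⟨h1, h2⟩ C hC
        rcases hC with rfl | hC
        · by_contra hno
          push_neg at hno
          exact h2 (fun i hi => by
            have := hno i hi
            cases hx : x i
            · exact absurd hx this
            · rfl)
        · exact h1 C hC
    -- arithmetic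
    set A := (univ.filter fun x => QR x ∧ ∀ i ∈ B, x i = true).card with hA
    set T := (univ.filter fun x => QR x ∧ ¬ ∀ i ∈ B, x i = true).card with hT
    set C := (univ.filter QR).card with hC
    -- hsplit : A + T = C ; hones : A * 2^B.card = C
    have key : T * 2 ^ B.card = (2 ^ B.card - 1) * C := by
      set p := 2 ^ B.card with hp
      have e1 : T * p + C = C * p := by
        calc T * p + C = T * p + A * p := by rw [hones]
          _ = (A + T) * p := by ring
          _ = C * p := by rw [hsplit]
      have h3 : (p - 1) * C = C * p - C := by rw [Nat.sub_one_mul, Nat.mul_comm]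
      rw [h3]
      exact Nat.eq_sub_of_add_eq e1
    rw [htgt]
    simp only [List.map_cons, List.sum_cons, List.prod_cons, pow_add]
    calc T * (2 ^ B.card * 2 ^ (R.map Finset.card).sum)
        = (T * 2 ^ B.card) * 2 ^ (R.map Finset.card).sum := by ring
      _ = ((2 ^ B.card - 1) * C) * 2 ^ (R.map Finset.card).sum := by rw [key]
      _ = (2 ^ B.card - 1) * (C * 2 ^ (R.map Finset.card).sum) := by ring
      _ = (2 ^ B.card - 1) * ((R.map fun B => 2 ^ B.card - 1).prod * 2 ^ n) := by rw [hC, ih hdR]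
      _ = _ := by ring

def fB (P : List (Finset (Fin n))) (x : Fin n → Bool) : Bool :=
  decide (∃ B ∈ P, ∀ i ∈ B, x i = true)

lemma fB_true_iff (P : List (Finset (Fin n))) (x : Fin n → Bool) :
    fB P x = true ↔ ∃ B ∈ P, ∀ i ∈ B, x i = true := by
  simp [fB]

lemma fB_ne_true_iff (P : List (Finset (Fin n))) (x : Fin n → Bool) :
    ¬ (fB P x = true) ↔ ∀ B ∈ P, ∃ j ∈ B, x j = false := by
  rw [fB_true_iff]
  push_neg
  simp only [Bool.not_eq_true]

lemma prod_cast_aux (P : List (Finset (Fin n))) :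
    (P.map fun B => 1 - ((1:ℝ)/2) ^ B.card).prod * 2 ^ ((P.map Finset.card).sum)
      = ((P.map fun B => 2 ^ B.card - 1).prod : ℕ) := by
  induction P with
  | nil => simp
  | cons B R ih =>
    simp only [List.map_cons, List.prod_cons, List.sum_cons, pow_add, Nat.cast_mul]
    rw [← ih]
    have h2 : ((2:ℕ) ^ B.card - 1 : ℕ) = ((2:ℝ) ^ B.card - 1) := by
      push_cast [Nat.one_le_two_pow]
      ring
    rw [h2]
    have : (1 - ((1:ℝ)/2) ^ B.card) * 2 ^ B.card = 2 ^ B.card - 1 := by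
      have : ((1:ℝ)/2) ^ B.card * 2 ^ B.card = 1 := by
        rw [← mul_pow]; norm_num
      nlinarith [this]
    nlinarith [this, ih]

lemma expectation_fB (P : List (Finset (Fin n))) (hd : P.Pairwise Disjoint) :
    expectation n (fB P) = 1 - (P.map fun B => 1 - ((1:ℝ)/2) ^ B.card).prod := by
  classical
  have hN := card_blocks P hd
  have hsplit := Finset.card_filter_add_card_filter_not
    (s := (univ : Finset (Fin n → Bool))) (p := fun x => fB P x = true)
  have hcu : (univ : Finset (Fin n → Bool)).card = 2 ^ n := by
    rw [Finset.card_univ, Fintype.card_fun, Fintype.card_bool, Fintype.card_fin]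
  have hneg : (univ.filter fun x : Fin n → Bool => ¬ fB P x = true)
      = univ.filter fun x => ∀ B ∈ P, ∃ j ∈ B, x j = false := by
    apply Finset.filter_congr
    intro x _
    exact_mod_cast fB_ne_true_iff P x
  rw [hneg, hcu] at hsplit
  -- real computation
  set NT := (univ.filter fun x : Fin n → Bool => fB P x = true).card
  set NF := (univ.filter fun x : Fin n → Bool => ∀ B ∈ P, ∃ j ∈ B, x j = false).card
  have hNFr : (NF : ℝ) = 2 ^ n * (P.map fun B => 1 - ((1:ℝ)/2) ^ B.card).prod := by
    have hcast : (NF : ℝ) * 2 ^ ((P.map Finset.card).sum)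
        = ((P.map fun B => 2 ^ B.card - 1).prod : ℕ) * 2 ^ n := by
      exact_mod_cast congrArg (Nat.cast : ℕ → ℝ) hN
    rw [← prod_cast_aux] at hcast
    have hpos : (0:ℝ) < 2 ^ ((P.map Finset.card).sum) := by positivity
    have := mul_right_cancel₀ (ne_of_gt hpos) (by
      rw [hcast]; ring :
      (NF : ℝ) * 2 ^ ((P.map Finset.card).sum)
        = (2 ^ n * (P.map fun B => 1 - ((1:ℝ)/2) ^ B.card).prod) * 2 ^ ((P.map Finset.card).sum))
    exact this
  have hNTr : (NT : ℝ) = 2 ^ n - NF := by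
    have : (NT : ℝ) + NF = 2 ^ n := by exact_mod_cast hsplit
    linarith
  rw [expectation, hNTr, hNFr]
  have hpos : (0:ℝ) < 2 ^ n := by positivity
  field_simp

lemma pairwise_unique_mem {P : List (Finset (Fin n))} (hd : P.Pairwise Disjoint)
    {B C : Finset (Fin n)} {j : Fin n} (hB : B ∈ P) (hC : C ∈ P) (hjB : j ∈ B) (hjC : j ∈ C) :
    C = B := by
  induction P with
  | nil => exact absurd hB List.not_mem_nil
  | cons D R ih =>
    have hd' := List.pairwise_cons.1 hd
    rcases List.mem_cons.1 hB with rfl | hB' <;> rcases List.mem_cons.1 hC with rfl | hC'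
    · rfl
    · exact absurd hjC (Finset.disjoint_left.1 (hd'.1 C hC') hjB)
    · exact absurd hjB (Finset.disjoint_left.1 (hd'.1 B hB') hjC)
    · exact ih hd'.2 hB' hC'

lemma influence_fB_not_mem (P : List (Finset (Fin n))) (j : Fin n)
    (hj : ∀ B ∈ P, j ∉ B) : influence n (fB P) j = 0 := by
  have : (univ.filter fun x : Fin n → Bool => fB P x ≠ fB P (flipCoord n j x)) = ∅ := by
    apply Finset.filter_false_of_mem
    intro x _
    simp only [ne_eq, not_not]
    have : ∀ B ∈ P, (∀ i ∈ B, x i = true) ↔ (∀ i ∈ B, flipCoord n j x i = true) := by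
      intro B hB
      have key : ∀ i ∈ B, flipCoord n j x i = x i :=
        fun i hi => flip_apply_ne j i x (fun e => hj B hB (e ▸ hi))
      constructor
      · intro h i hi; rw [key i hi]; exact h i hi
      · intro h i hi; rw [← key i hi]; exact h i hi
    simp only [fB, decide_eq_decide]
    constructor
    · rintro ⟨B, hB, h⟩; exact ⟨B, hB, (this B hB).1 h⟩
    · rintro ⟨B, hB, h⟩; exact ⟨B, hB, (this B hB).2 h⟩
  rw [influence, this]
  simp

lemma influence_fB_mem (P : List (Finset (Fin n))) (hd : P.Pairwise Disjoint)
    {B : Finset (Fin n)} {j : Fin n} (hB : B ∈ P) (hj : j ∈ B) :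
    influence n (fB P) j ≤ ((1:ℝ)/2) ^ (B.card - 1) := by
  classical
  have hsub : (univ.filter fun x : Fin n → Bool => fB P x ≠ fB P (flipCoord n j x))
      ⊆ univ.filter fun x => True ∧ ∀ i ∈ B.erase j, x i = true := by
    intro x hx
    simp only [Finset.mem_filter, Finset.mem_univ, true_and] at hx ⊢
    by_contra hno
    push_neg at hno
    obtain ⟨i, hi, hiv⟩ := hno
    have hxi : x i = false := by cases hx' : x i; rfl; exact absurd hx' hiv
    apply hx
    have key : ∀ C ∈ P, (∀ i' ∈ C, x i' = true) ↔ (∀ i' ∈ C, flipCoord n j x i' = true) := by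
      intro C hC
      by_cases hjC : j ∈ C
      · have hCB : C = B := pairwise_unique_mem hd hB hC hj hjC
        subst hCB
        constructor
        · intro h; exact absurd (h i (Finset.mem_of_mem_erase hi)) (by simp [hxi])
        · intro h
          have := h i (Finset.mem_of_mem_erase hi)
          rw [flip_apply_ne j i x (Finset.ne_of_mem_erase hi)] at this
          exact absurd this (by simp [hxi])
      · constructor
        · intro h i' hi'
          rw [flip_apply_ne j i' x (fun e => hjC (e ▸ hi'))]
          exact h i' hi'
        · intro h i' hi'
          have := h i' hi'
          rwa [flip_apply_ne j i' x (fun e => hjC (e ▸ hi'))] at this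
    simp only [fB, decide_eq_decide]
    constructor
    · rintro ⟨C, hC, h⟩; exact ⟨C, hC, (key C hC).1 h⟩
    · rintro ⟨C, hC, h⟩; exact ⟨C, hC, (key C hC).2 h⟩
  have hcard := card_ones (B.erase j) (fun _ => True) (by intro _ _ _; simp)
  have hcu : (univ.filter fun _ : Fin n → Bool => True).card = 2 ^ n := by
    rw [Finset.filter_true_of_mem (fun _ _ => trivial), Finset.card_univ, Fintype.card_fun,
      Fintype.card_bool, Fintype.card_fin]
  rw [hcu, Finset.card_erase_of_mem hj] at hcard
  have hle := Finset.card_le_card hsub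
  rw [influence]
  rw [div_le_iff₀ (by positivity : (0:ℝ) < 2 ^ n)]
  have h2 : ((1:ℝ)/2) ^ (B.card - 1) * 2 ^ n
      = ((univ.filter fun x : Fin n → Bool => True ∧ ∀ i ∈ B.erase j, x i = true).card : ℝ) := by
    have hc : ((univ.filter fun x : Fin n → Bool => True ∧ ∀ i ∈ B.erase j, x i = true).card : ℝ)
        * 2 ^ (B.card - 1) = 2 ^ n := by exact_mod_cast congrArg (Nat.cast : ℕ → ℝ) hcard
    have hpos : (0:ℝ) < 2 ^ (B.card - 1) := by positivity
    rw [div_pow, one_pow, div_mul_eq_mul_div, one_mul, eq_comm, eq_div_iff (ne_of_gt hpos)]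
    exact hc
  rw [h2]
  exact_mod_cast hle

noncomputable def LBr (d : ℕ) : ℝ := ((1:ℝ)/2) ^ d / (2 * ((d:ℝ) - 1))

lemma LBr_nonneg {c : ℕ} (hc : 2 ≤ c) : 0 ≤ LBr c := by
  have : (2:ℝ) ≤ c := by exact_mod_cast hc
  unfold LBr
  apply div_nonneg (by positivity)
  linarith

lemma LBr_succ_le {c : ℕ} (hc : 2 ≤ c) : LBr (c+1) ≤ LBr c := by
  have hc' : (2:ℝ) ≤ c := by exact_mod_cast hc
  unfold LBr
  push_cast
  apply div_le_div₀ (by positivity)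
  · calc ((1:ℝ)/2) ^ (c+1) = (1/2)^c * (1/2) := by rw [pow_succ]
      _ ≤ (1/2)^c * 1 := by
          apply mul_le_mul_of_nonneg_left (by norm_num) (by positivity)
      _ = (1/2)^c := by ring
  · linarith
  · linarith

lemma mul_LBr_le {c : ℕ} (hc : 2 ≤ c) : (c:ℝ) * LBr c ≤ ((1:ℝ)/2) ^ c := by
  have hc' : (2:ℝ) ≤ c := by exact_mod_cast hc
  unfold LBr
  rw [mul_div_assoc']
  rw [div_le_iff₀ (by linarith)]
  have h0 : (0:ℝ) ≤ ((1:ℝ)/2)^c := by positivity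
  nlinarith

lemma sum_map_const {X : Type*} {l : List X} {v : X → ℝ} {a : ℝ} (h : ∀ x ∈ l, v x = a) :
    (l.map v).sum = l.length * a := by
  induction l with
  | nil => simp
  | cons x r ih =>
    simp only [List.map_cons, List.sum_cons, List.length_cons]
    rw [h x List.mem_cons_self, ih (fun y hy => h y (List.mem_cons_of_mem x hy))]
    push_cast
    ring

lemma chop : ∀ (N : ℕ) (pool : Finset (Fin n)) (c : ℕ), 0 < c → pool.card ≤ N →
    ∃ (bs : List (Finset (Fin n))) (L' : Finset (Fin n)),
      bs.length = pool.card / c ∧ L'.card = pool.card % c ∧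
      (∀ B ∈ bs, B ⊆ pool ∧ B.card = c) ∧ L' ⊆ pool ∧
      bs.Pairwise Disjoint ∧ (∀ B ∈ bs, Disjoint B L') := by
  intro N
  induction N with
  | zero =>
    intro pool c hc hcard
    refine ⟨[], pool, ?_⟩
    have h0 : pool.card = 0 := Nat.le_zero.1 hcard
    simp [h0, Nat.zero_div, Nat.zero_mod, List.Pairwise.nil]
  | succ N ih =>
    intro pool c hc hcard
    by_cases hlt : pool.card < c
    · refine ⟨[], pool, ?_⟩
      simp [Nat.div_eq_of_lt hlt, Nat.mod_eq_of_lt hlt, List.Pairwise.nil]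
    · push_neg at hlt
      obtain ⟨t, hts, htc⟩ := Finset.exists_subset_card_eq hlt
      set rest := pool \ t with hrest
      have hrestcard : rest.card = pool.card - c := by
        rw [hrest, Finset.card_sdiff_of_subset hts, htc]
      have hrestle : rest.card ≤ N := by omega
      obtain ⟨bs, L', hlen, hLcard, hprops, hLsub, hpw, hdisjL⟩ := ih rest c hc hrestle
      have e : rest.card + c = pool.card := by omega
      refine ⟨t :: bs, L', ?_, ?_, ?_, ?_, ?_, ?_⟩
      · simp only [List.length_cons, hlen]
        rw [← e, Nat.add_div_right _ hc]
      · rw [hLcard, ← e, Nat.add_mod_right]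
      · intro B hB
        rcases List.mem_cons.1 hB with rfl | hB'
        · exact ⟨hts, htc⟩
        · exact ⟨(hprops B hB').1.trans (Finset.sdiff_subset), (hprops B hB').2⟩
      · exact hLsub.trans (Finset.sdiff_subset)
      · rw [List.pairwise_cons]
        refine ⟨fun B hB => ?_, hpw⟩
        have := (hprops B hB).1
        exact Finset.disjoint_left.2 fun a hat haB =>
          (Finset.mem_sdiff.1 (this haB)).2 hat
      · intro B hB
        rcases List.mem_cons.1 hB with rfl | hB'
        · exact Finset.disjoint_left.2 fun a hat haL =>
            (Finset.mem_sdiff.1 (hLsub haL)).2 hat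
        · exact hdisjL B hB'

lemma go (k : Fin n → ℕ) :
    ∀ (M : ℕ) (c : ℕ) (Fs : ℕ → Finset (Fin n)) (L : Finset (Fin n)),
    2 ≤ c → L.card ≤ c - 1 →
    (∀ i, i < M → ∀ j ∈ Fs i, k j = c + i) →
    (∀ j ∈ L, k j ≤ c) →
    (∀ i, i < M → Disjoint L (Fs i)) →
    (∀ i i', i < M → i' < M → i ≠ i' → Disjoint (Fs i) (Fs i')) →
    ∃ blocks : List (Finset (Fin n)),
      blocks.Pairwise Disjoint ∧
      (∀ B ∈ blocks, 2 ≤ B.card ∧ (∀ j ∈ B, k j ≤ B.card) ∧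
        B ⊆ L ∪ (Finset.range M).biUnion Fs) ∧
      (L.card : ℝ) * LBr c + (∑ i ∈ Finset.range M, ((Fs i).card : ℝ) * LBr (c+i))
        - (((c:ℝ) - 2) * LBr c + ∑ i ∈ Finset.range (M+1), LBr (c+i))
        ≤ (blocks.map fun B => ((1:ℝ)/2) ^ B.card).sum := by
  intro M
  induction M with
  | zero =>
    intro c Fs L hc hL _ _ _ _
    refine ⟨[], List.Pairwise.nil, fun B hB => absurd hB List.not_mem_nil, ?_⟩
    simp only [Finset.range_zero, Finset.sum_empty, List.map_nil, List.sum_nil, zero_add,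
      Finset.sum_range_one, add_zero, Nat.add_zero]
    have h1 : (L.card : ℝ) ≤ (c:ℝ) - 1 := by
      have : (L.card : ℝ) ≤ ((c - 1 : ℕ) : ℝ) := by exact_mod_cast hL
      have h2 : ((c - 1 : ℕ) : ℝ) = (c:ℝ) - 1 := by
        have : 1 ≤ c := le_trans (by norm_num) hc
        push_cast [this]
        ring
      linarith
    have h2 := LBr_nonneg hc
    nlinarith
  | succ M ih =>
    intro c Fs L hc hL hclass hLk hdLF hdFF
    set pool := L ∪ Fs 0 with hpool
    have hdisj0 : Disjoint L (Fs 0) := hdLF 0 (Nat.succ_pos M)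
    have hpoolcard : pool.card = L.card + (Fs 0).card := Finset.card_union_of_disjoint hdisj0
    obtain ⟨bs, L', hlen, hL'card, hprops, hL'sub, hpw, hdisjL'⟩ :=
      chop pool.card pool c (by omega) le_rfl
    -- recursive call
    obtain ⟨blocks', hpw', hprops', hsum'⟩ := ih (c+1) (fun i => Fs (i+1)) L'
      (by omega)
      (by
        rw [hL'card]
        have := Nat.mod_lt pool.card (show 0 < c by omega)
        omega)
      (by
        intro i hi j hj
        have := hclass (i+1) (by omega) j hj
        omega)
      (by
        intro j hj
        rcases Finset.mem_union.1 (hL'sub hj) with h | h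
        · exact le_trans (hLk j h) (by omega)
        · have := hclass 0 (by omega) j h; omega)
      (by
        intro i hi
        apply Finset.disjoint_left.2
        intro a haL' haF
        rcases Finset.mem_union.1 (hL'sub haL') with h | h
        · exact Finset.disjoint_left.1 (hdLF (i+1) (by omega)) h haF
        · exact Finset.disjoint_left.1 (hdFF 0 (i+1) (by omega) (by omega) (by omega)) h haF)
      (by
        intro i i' hi hi' hne
        exact hdFF (i+1) (i'+1) (by omega) (by omega) (by omega))
    refine ⟨bs ++ blocks', ?_, ?_, ?_⟩
    · rw [List.pairwise_append]
      refine ⟨hpw, hpw', ?_⟩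
      intro B hB B' hB'
      have hBpool := (hprops B hB).1
      have hB'sub := (hprops' B' hB').2.2
      apply Finset.disjoint_left.2
      intro a haB haB'
      rcases Finset.mem_union.1 (hB'sub haB') with h | h
      · exact Finset.disjoint_left.1 (hdisjL' B hB) haB h
      · obtain ⟨i, hi, hai⟩ := Finset.mem_biUnion.1 h
        have hiM : i < M := Finset.mem_range.1 hi
        rcases Finset.mem_union.1 (hBpool haB) with hL | hF
        · exact Finset.disjoint_left.1 (hdLF (i+1) (by omega)) hL hai
        · exact Finset.disjoint_left.1 (hdFF 0 (i+1) (by omega) (by omega) (by omega)) hF hai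
    · intro B hB
      rcases List.mem_append.1 hB with hB | hB
      · obtain ⟨hBsub, hBcard⟩ := hprops B hB
        refine ⟨by omega, ?_, ?_⟩
        · intro j hj
          rw [hBcard]
          rcases Finset.mem_union.1 (hBsub hj) with h | h
          · exact hLk j h
          · have := hclass 0 (by omega) j h; omega
        · refine hBsub.trans ?_
          apply Finset.union_subset_union_right
          intro a ha
          exact Finset.mem_biUnion.2 ⟨0, Finset.mem_range.2 (by omega), ha⟩
      · obtain ⟨h1, h2, h3⟩ := hprops' B hB
        refine ⟨h1, h2, ?_⟩
        refine h3.trans ?_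
        intro a ha
        rcases Finset.mem_union.1 ha with h | h
        · rcases Finset.mem_union.1 (hL'sub h) with h' | h'
          · exact Finset.mem_union_left _ h'
          · exact Finset.mem_union_right _
              (Finset.mem_biUnion.2 ⟨0, Finset.mem_range.2 (by omega), h'⟩)
        · obtain ⟨i, hi, hai⟩ := Finset.mem_biUnion.1 h
          exact Finset.mem_union_right _
            (Finset.mem_biUnion.2 ⟨i+1, Finset.mem_range.2 (by have := Finset.mem_range.1 hi; omega), hai⟩)
    · -- numeric inequality
      rw [List.map_append, List.sum_append]
      have hbs_sum : (bs.map fun B => ((1:ℝ)/2) ^ B.card).sum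
          = (pool.card / c : ℕ) * ((1:ℝ)/2) ^ c := by
        rw [sum_map_const (fun B hB => by rw [(hprops B hB).2]), hlen]
      rw [hbs_sum]
      -- rewrite sums
      rw [Finset.sum_range_succ' (fun i => ((Fs i).card : ℝ) * LBr (c+i)) M]
      rw [Finset.sum_range_succ' (fun i => LBr (c+i)) (M+1)]
      simp only [Nat.add_zero] at *
      -- abbreviations
      set q := pool.card / c with hq
      set r := pool.card % c with hr
      have hdm : c * q + r = pool.card := Nat.div_add_mod pool.card c
      have hrlt : r < c := Nat.mod_lt _ (by omega)
      have key : ∀ i ∈ Finset.range M, ((Fs (i+1)).card : ℝ) * LBr (c+(i+1))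
          = ((Fs (i+1)).card : ℝ) * LBr ((c+1)+i) := by
        intro i _
        congr 2
        omega
      rw [Finset.sum_congr rfl key]
      have key2 : ∀ i ∈ Finset.range (M+1), LBr (c+(i+1)) = LBr ((c+1)+i) := by
        intro i _
        congr 1
        omega
      rw [Finset.sum_congr rfl key2]
      -- from IH
      have hIH := hsum'
      push_cast at hIH ⊢
      -- main estimates
      have e1 : (c:ℝ) * (q:ℝ) * LBr c ≤ (q:ℝ) * ((1:ℝ)/2)^c := by
        have := mul_LBr_le hc
        have hq0 : (0:ℝ) ≤ (q:ℝ) := Nat.cast_nonneg q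
        nlinarith
      have e2 : ((r:ℝ) - ((c:ℝ) - 1)) * (LBr c - LBr (c+1)) ≤ 0 := by
        apply mul_nonpos_of_nonpos_of_nonneg
        · have : (r:ℝ) ≤ (c:ℝ) - 1 := by
            have : (r:ℝ) + 1 ≤ (c:ℝ) := by exact_mod_cast hrlt
            linarith
          linarith
        · linarith [LBr_succ_le hc]
      have e3 : ((L.card:ℝ) + ((Fs 0).card:ℝ)) = (c:ℝ) * q + r := by
        have : (pool.card : ℝ) = (c:ℝ) * q + r := by exact_mod_cast hdm.symm
        rw [← this]
        exact_mod_cast hpoolcard.symm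
      have hL'r : (L'.card : ℝ) = (r:ℝ) := by exact_mod_cast hL'card
      rw [hL'r] at hIH
      push_cast at hIH
      have e4 : ((L.card:ℝ) + ((Fs 0).card:ℝ)) * LBr c = ((c:ℝ) * (q:ℝ) + (r:ℝ)) * LBr c := by
        rw [e3]
      nlinarith [hIH, e1, e2, e4]

lemma errsum_le (K : ℕ) : ∑ i ∈ Finset.range K, LBr (2+i) ≤ Real.log 2 / 4 := by
  have hs : HasSum (fun m : ℕ => ((1:ℝ)/2) ^ (m+1) / ((m:ℝ)+1)) (Real.log 2) := by
    have := Real.hasSum_pow_div_log_of_abs_lt_one (x := (1:ℝ)/2) (by rw [abs_of_pos] <;> norm_num)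
    have h12 : (1:ℝ) - 1/2 = 2⁻¹ := by norm_num
    rwa [h12, Real.log_inv, neg_neg] at this
  have hpart : ∑ i ∈ Finset.range K, ((1:ℝ)/2) ^ (i+1) / ((i:ℝ)+1) ≤ Real.log 2 :=
    sum_le_hasSum (Finset.range K) (fun i _ => by positivity) hs
  have heq : ∀ i, LBr (2+i) = (((1:ℝ)/2) ^ (i+1) / ((i:ℝ)+1)) / 4 := by
    intro i
    unfold LBr
    have h1 : ((1:ℝ)/2) ^ (2+i) = ((1:ℝ)/2) ^ (i+1) * (1/2) := by
      rw [← pow_succ]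
      congr 1
      omega
    rw [h1]
    have h2 : ((2+i:ℕ):ℝ) - 1 = (i:ℝ) + 1 := by push_cast; ring
    rw [h2]
    have h3 : (i:ℝ) + 1 > 0 := by positivity
    field_simp
    ring
  calc ∑ i ∈ Finset.range K, LBr (2+i)
      = (∑ i ∈ Finset.range K, ((1:ℝ)/2) ^ (i+1) / ((i:ℝ)+1)) / 4 := by
        rw [Finset.sum_div]
        exact Finset.sum_congr rfl (fun i _ => heq i)
    _ ≤ Real.log 2 / 4 := by linarith

lemma list_prod_le_exp : ∀ (l : List ℝ), (∀ p ∈ l, 0 ≤ p ∧ p ≤ 1) →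
    (l.map fun p => 1 - p).prod ≤ Real.exp (-(l.sum)) := by
  intro l
  induction l with
  | nil => simp
  | cons p r ih =>
    intro h
    simp only [List.map_cons, List.prod_cons, List.sum_cons]
    have hp := h p List.mem_cons_self
    have hr := fun q hq => h q (List.mem_cons_of_mem p hq)
    have h1 : 1 - p ≤ Real.exp (-p) := by
      have := Real.add_one_le_exp (-p)
      linarith
    have h2 : (r.map fun p => 1 - p).prod ≤ Real.exp (-(r.sum)) := ih hr
    have h3 : (0:ℝ) ≤ (r.map fun p => 1 - p).prod := by
      apply List.prod_nonneg
      intro x hx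
      obtain ⟨q, hq, rfl⟩ := List.mem_map.1 hx
      linarith [(hr q hq).2]
    calc (1 - p) * (r.map fun p => 1 - p).prod
        ≤ Real.exp (-p) * Real.exp (-(r.sum)) := by
          apply mul_le_mul h1 h2 h3 (le_of_lt (Real.exp_pos _))
      _ = Real.exp (-(p + r.sum)) := by rw [← Real.exp_add]; ring_nf
    
lemma pre' {X : Type*} : ∀ (l : List X) (v : X → ℝ) (t : ℝ),
    (∀ x ∈ l, 3/4 ≤ v x ∧ v x ≤ 1) → t ≤ 1 → (l.map v).prod ≤ t →
    ∃ p : List X, p.Sublist l ∧ (p.map v).prod ≤ t ∧ 3/4 * t ≤ (p.map v).prod := by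
  intro l
  induction l with
  | nil =>
    intro v t _ ht hp
    simp only [List.map_nil, List.prod_nil] at hp
    exact ⟨[], List.Sublist.refl _, by simpa using hp, by simp; linarith⟩
  | cons x r ih =>
    intro v t hv ht hp
    have hvx := hv x List.mem_cons_self
    by_cases hxt : v x ≤ t
    · refine ⟨[x], by
        have : ([x] : List X) = [x] ++ [] := by simp
        exact List.Sublist.cons₂ x (List.nil_sublist r), ?_, ?_⟩
      · simpa using hxt
      · simp only [List.map_cons, List.map_nil, List.prod_cons, List.prod_nil, mul_one]
        nlinarith [hvx.1]
    · push_neg at hxt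
      have hvx0 : 0 < v x := by linarith
      have hr : (r.map v).prod ≤ t / v x := by
        simp only [List.map_cons, List.prod_cons] at hp
        rw [le_div_iff₀ hvx0]
        nlinarith
      obtain ⟨p, hps, hp1, hp2⟩ := ih v (t / v x)
        (fun y hy => hv y (List.mem_cons_of_mem x hy))
        (by rw [div_le_one hvx0]; linarith)
        hr
      refine ⟨x :: p, List.Sublist.cons₂ x hps, ?_, ?_⟩
      · simp only [List.map_cons, List.prod_cons]
        calc v x * (p.map v).prod ≤ v x * (t / v x) := by
              apply mul_le_mul_of_nonneg_left hp1 (le_of_lt hvx0)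
          _ = t := by field_simp
      · simp only [List.map_cons, List.prod_cons]
        calc 3/4 * t = v x * (3/4 * (t / v x)) := by field_simp
          _ ≤ v x * (p.map v).prod := by
              apply mul_le_mul_of_nonneg_left hp2 (le_of_lt hvx0)

lemma F1 {a : ℝ} (h0 : 0 < a) (h1 : a ≤ 1) :
    ((1:ℝ)/2) ^ (⌊Real.logb 2 a⁻¹⌋₊ + 1) < a := by
  set t := ⌊Real.logb 2 a⁻¹⌋₊ with ht
  have hinv : 1 ≤ a⁻¹ := by
    rw [show (1:ℝ) = 1⁻¹ by norm_num]
    exact inv_anti₀ h0 h1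
  have hlog0 : 0 ≤ Real.logb 2 a⁻¹ := Real.logb_nonneg (by norm_num) hinv
  have hlt : Real.logb 2 a⁻¹ < (t:ℝ) + 1 := by
    have := Nat.lt_succ_floor (Real.logb 2 a⁻¹)
    push_cast at this
    linarith
  have hid : a⁻¹ = (2:ℝ) ^ (Real.logb 2 a⁻¹) :=
    (Real.rpow_logb (by norm_num) (by norm_num) (inv_pos.2 h0)).symm
  have hlt2 : a⁻¹ < (2:ℝ) ^ ((t:ℝ) + 1) := by
    rw [hid]
    exact Real.rpow_lt_rpow_left_iff (by norm_num : (1:ℝ) < 2) |>.2 hlt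
  have hnat : (2:ℝ) ^ ((t:ℝ) + 1) = (2:ℝ) ^ (t + 1 : ℕ) := by
    rw [← Real.rpow_natCast 2 (t+1)]
    push_cast
    ring_nf
  rw [hnat] at hlt2
  have hpow : (0:ℝ) < (2:ℝ) ^ (t+1 : ℕ) := by positivity
  rw [div_pow, one_pow, div_lt_iff₀ hpow]
  have := mul_lt_mul_of_pos_left hlt2 h0
  rwa [mul_inv_cancel₀ (ne_of_gt h0)] at this

lemma F2 {a : ℝ} (h0 : 0 < a) (h1 : a ≤ 1) :
    a / (8 * (1 - Real.logb 2 a)) ≤ LBr (⌊Real.logb 2 a⁻¹⌋₊ + 2) := by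
  set t := ⌊Real.logb 2 a⁻¹⌋₊ with ht
  have hinv : 1 ≤ a⁻¹ := by
    rw [show (1:ℝ) = 1⁻¹ by norm_num]
    exact inv_anti₀ h0 h1
  have hlog0 : 0 ≤ Real.logb 2 a⁻¹ := Real.logb_nonneg (by norm_num) hinv
  have hfl : (t:ℝ) ≤ Real.logb 2 a⁻¹ := Nat.floor_le hlog0
  have hlogid : Real.logb 2 a⁻¹ = - Real.logb 2 a := Real.logb_inv 2 a
  have hid : a⁻¹ = (2:ℝ) ^ (Real.logb 2 a⁻¹) :=
    (Real.rpow_logb (by norm_num) (by norm_num) (inv_pos.2 h0)).symm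
  have hle2 : (2:ℝ) ^ (t:ℕ) ≤ a⁻¹ := by
    rw [hid, ← Real.rpow_natCast 2 t]
    exact Real.rpow_le_rpow_left_iff (by norm_num : (1:ℝ) < 2) |>.2 hfl
  have ha2 : a ≤ ((1:ℝ)/2) ^ (t:ℕ) := by
    have hpow : (0:ℝ) < (2:ℝ) ^ (t:ℕ) := by positivity
    rw [div_pow, one_pow, le_div_iff₀ hpow]
    have := mul_le_mul_of_nonneg_left hle2 h0.le
    rwa [mul_inv_cancel₀ (ne_of_gt h0)] at this
  have hdenom : 8 * ((t:ℝ) + 1) ≤ 8 * (1 - Real.logb 2 a) := by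
    have h4 : (t:ℝ) ≤ - Real.logb 2 a := by rw [← hlogid]; exact hfl
    linarith
  have hLBr : LBr (t + 2) = ((1:ℝ)/2) ^ (t:ℕ) / (8 * ((t:ℝ) + 1)) := by
    unfold LBr
    have h1' : ((1:ℝ)/2) ^ (t+2) = ((1:ℝ)/2) ^ t * (1/4) := by
      rw [pow_add]; norm_num
    rw [h1']
    have h2' : ((t+2:ℕ):ℝ) - 1 = (t:ℝ) + 1 := by push_cast; ring
    rw [h2']
    have h3 : (0:ℝ) < (t:ℝ) + 1 := by positivity
    field_simp
    ring
  rw [hLBr]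
  have htpos : (0:ℝ) < 8 * ((t:ℝ) + 1) := by positivity
  exact div_le_div₀ (by positivity) ha2 htpos hdenom

end CT
/-- **Converse of Talagrand's theorem.**
Given `0 < a_1, …, a_n ≤ 1` and `α = ∑_j a_j / (1 - log₂ a_j) - 2 ln 2`, for every
`0 < μ ≤ 1 - exp(-α/8)` there is a Boolean function `f` on `n` variables with
`μ ≤ E[f] ≤ (3/4)μ + 1/4` and `Inf_j[f] < a_j` for every `j`. -/
theorem converse_talagrand (n : ℕ) (hn : 1 ≤ n) (a : Fin n → ℝ)
    (ha : ∀ j, 0 < a j ∧ a j ≤ 1)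
    (α : ℝ) (hα : α = (∑ j, a j / (1 - Real.logb 2 (a j))) - 2 * Real.log 2)
    (μ : ℝ) (hμ0 : 0 < μ) (hμ1 : μ ≤ 1 - Real.exp (-α / 8)) :
    ∃ f : (Fin n → Bool) → Bool,
      μ ≤ expectation n f ∧
      expectation n f ≤ 3 / 4 * μ + 1 / 4 ∧
      ∀ j : Fin n, influence n f j < a j := by
  classical
  have hα0 : 0 < α := by
    by_contra hneg
    push_neg at hneg
    have h1 : (1:ℝ) ≤ Real.exp (-α / 8) := by
      rw [← Real.exp_zero]
      exact Real.exp_le_exp.2 (by linarith)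
    linarith
  have hμlt1 : μ < 1 := by
    have := Real.exp_pos (-α / 8)
    linarith
  set k : Fin n → ℕ := fun j => ⌊Real.logb 2 (a j)⁻¹⌋₊ + 2 with hk
  have hk2 : ∀ j, 2 ≤ k j := fun j => by simp [hk]
  set M := Finset.univ.sup k with hM
  have hkM : ∀ j, k j ≤ M := fun j => Finset.le_sup (Finset.mem_univ j)
  set Fs : ℕ → Finset (Fin n) := fun i => Finset.univ.filter (fun j => k j - 2 = i) with hFs
  obtain ⟨blocks, hbpw, hbprops, hbsum⟩ := go k M 2 Fs ∅ le_rfl (by simp)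
    (by
      intro i _ j hj
      have h := (Finset.mem_filter.1 hj).2
      have := hk2 j
      omega)
    (by intro j hj; exact absurd hj (Finset.notMem_empty j))
    (by
      intro i _
      exact Finset.disjoint_left.2 (fun b hb => absurd hb (Finset.notMem_empty b)))
    (by
      intro i i' _ _ hne
      apply Finset.disjoint_left.2
      intro b hb hb'
      have h1 := (Finset.mem_filter.1 hb).2
      have h2 := (Finset.mem_filter.1 hb').2
      exact hne (h1 ▸ h2 ▸ rfl))
  -- fiberwise sum identity
  have hfib : ∑ i ∈ Finset.range M, ((Fs i).card : ℝ) * LBr (2+i) = ∑ j : Fin n, LBr (k j) := by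
    have hmaps : ∀ j ∈ (Finset.univ : Finset (Fin n)), k j - 2 ∈ Finset.range M := by
      intro j _
      have := hkM j
      have := hk2 j
      exact Finset.mem_range.2 (by omega)
    have hfw := Finset.sum_fiberwise_of_maps_to hmaps (fun j => LBr (k j))
    rw [← hfw]
    apply Finset.sum_congr rfl
    intro i _
    have hcg : ∀ j ∈ Fs i, LBr (k j) = LBr (2+i) := by
      intro j hj
      have h := (Finset.mem_filter.1 hj).2
      have := hk2 j
      congr 1
      omega
    rw [Finset.sum_congr rfl hcg, Finset.sum_const, nsmul_eq_mul]
  have hsum1 : (∑ j : Fin n, LBr (k j)) - Real.log 2 / 4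
      ≤ (blocks.map fun B => ((1:ℝ)/2) ^ B.card).sum := by
    have he := errsum_le (M+1)
    rw [hfib] at hbsum
    simp only [Finset.card_empty, Nat.cast_zero, zero_mul, zero_add, Nat.cast_ofNat] at hbsum
    have h22 : ((2:ℝ) - 2) * LBr 2 = 0 := by ring
    rw [h22] at hbsum
    rw [zero_add] at hbsum
    linarith
  have hLBj : ∀ j, a j / (8 * (1 - Real.logb 2 (a j))) ≤ LBr (k j) := by
    intro j
    have := F2 (ha j).1 (ha j).2
    simpa [hk] using this
  have hsum2 : (α + 2 * Real.log 2) / 8 ≤ ∑ j : Fin n, LBr (k j) := by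
    have h1 : ∑ j : Fin n, a j / (8 * (1 - Real.logb 2 (a j))) ≤ ∑ j : Fin n, LBr (k j) :=
      Finset.sum_le_sum (fun j _ => hLBj j)
    have h2 : ∑ j : Fin n, a j / (8 * (1 - Real.logb 2 (a j)))
        = (∑ j : Fin n, a j / (1 - Real.logb 2 (a j))) / 8 := by
      rw [Finset.sum_div]
      apply Finset.sum_congr rfl
      intro j _
      rw [div_div, mul_comm]
    have h3 : (∑ j : Fin n, a j / (1 - Real.logb 2 (a j))) = α + 2 * Real.log 2 := by
      rw [hα]; ring
    rw [h2, h3] at h1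
    exact h1
  have hblocksum : α / 8 ≤ (blocks.map fun B => ((1:ℝ)/2) ^ B.card).sum := by
    linarith
  -- product bound
  have hprodle : (blocks.map fun B => 1 - ((1:ℝ)/2) ^ B.card).prod ≤ 1 - μ := by
    set l := blocks.map (fun B => ((1:ℝ)/2) ^ B.card) with hl
    have hmem : ∀ p ∈ l, 0 ≤ p ∧ p ≤ 1 := by
      intro p hp
      obtain ⟨B, hB, rfl⟩ := List.mem_map.1 hp
      refine ⟨by positivity, ?_⟩
      apply pow_le_one₀ <;> norm_num
    have h := list_prod_le_exp l hmem
    rw [hl, List.map_map] at h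
    have hcomp : ((fun p : ℝ => 1 - p) ∘ fun B : Finset (Fin n) => ((1:ℝ)/2) ^ B.card)
        = fun B : Finset (Fin n) => 1 - ((1:ℝ)/2) ^ B.card := rfl
    rw [hcomp] at h
    have h2 : Real.exp (-(l.sum)) ≤ Real.exp (-α / 8) := by
      apply Real.exp_le_exp.2
      have : α / 8 ≤ l.sum := hblocksum
      linarith
    have h3 : Real.exp (-α / 8) ≤ 1 - μ := by linarith
    exact le_trans (le_trans h h2) h3
  have hfac : ∀ B ∈ blocks, 3/4 ≤ 1 - ((1:ℝ)/2) ^ B.card ∧ 1 - ((1:ℝ)/2) ^ B.card ≤ 1 := by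
    intro B hB
    have hc2 := (hbprops B hB).1
    have hle : ((1:ℝ)/2) ^ B.card ≤ ((1:ℝ)/2) ^ 2 :=
      pow_le_pow_of_le_one (by norm_num) (by norm_num) hc2
    have h0 : (0:ℝ) ≤ ((1:ℝ)/2) ^ B.card := by positivity
    norm_num at hle
    constructor <;> linarith
  obtain ⟨P, hPsub, hP1, hP2⟩ := pre' blocks (fun B => 1 - ((1:ℝ)/2) ^ B.card) (1 - μ)
    hfac (by linarith) hprodle
  have hPpw : P.Pairwise Disjoint := List.Pairwise.sublist hPsub hbpw
  have hPmem : ∀ B ∈ P, B ∈ blocks := fun B hB => hPsub.subset hB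
  refine ⟨fB P, ?_, ?_, ?_⟩
  · rw [expectation_fB P hPpw]
    linarith
  · rw [expectation_fB P hPpw]
    linarith
  · intro j
    by_cases hj : ∃ B ∈ P, j ∈ B
    · obtain ⟨B, hBP, hjB⟩ := hj
      have h1 := influence_fB_mem P hPpw hBP hjB
      have hkB : k j ≤ B.card := (hbprops B (hPmem B hBP)).2.1 j hjB
      have hB2 := (hbprops B (hPmem B hBP)).1
      have h2 : ((1:ℝ)/2) ^ (B.card - 1) ≤ ((1:ℝ)/2) ^ (k j - 1) :=
        pow_le_pow_of_le_one (by norm_num) (by norm_num) (by have := hk2 j; omega)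
      have h3 : ((1:ℝ)/2) ^ (k j - 1) < a j := by
        have hF1 := F1 (ha j).1 (ha j).2
        have hkj : k j - 1 = ⌊Real.logb 2 (a j)⁻¹⌋₊ + 1 := by simp [hk]
        rw [hkj]
        exact hF1
      linarith
    · push_neg at hj
      rw [influence_fB_not_mem P j hj]
      exact (ha j).1
end

section
/- Let n be a positive integer and let 1 ≥ a_1 ≥ a_2 ≥ ⋯ ≥ a_n > 0 be a nonincreasing sequence of real numbers. Define s_0 = 0 and, recursively for i ≥ 1, k_i = min{ k ≥ 1 : s_{i-1} + k ≤ n and a_{s_{i-1}+k} > 2^{1−k} } and s_i = s_{i-1} + k_i, with m the largest index for which this minimum exists (i.e., the set {k ≥ 1 : s_m + k ≤ n and a_{s_m + k} > 2^{1−k}} is empty). Then ∑_{i=1}^{m} 2^{−k_i} ≥ ((∑_{j=1}^n a_j/(1 − log₂ a_j)) − 2·ln 2)/8. -/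
open Finset

noncomputable def tribeG (t : ℕ) : ℝ := (2:ℝ) ^ (1 - (t:ℤ)) / t

noncomputable def tribeW (p : ℕ) : ℝ :=
  if p = 1 then 2 * Real.log 2 else (2:ℝ) ^ (1 - (p:ℤ)) * (1 + 1/(p+1))

lemma two_zpow_pos (z : ℤ) : (0:ℝ) < 2 ^ z := zpow_pos (by norm_num) z

lemma two_zpow_one_sub (t : ℕ) : (2:ℝ) ^ (1 - (t:ℤ)) = 2 * (1/2) ^ t := by
  rw [zpow_sub₀ (by norm_num : (2:ℝ) ≠ 0), zpow_one, zpow_natCast]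
  simp [div_eq_mul_inv, one_div, inv_pow]

lemma tribeG_anti {t t' : ℕ} (ht : 1 ≤ t) (h : t ≤ t') : tribeG t' ≤ tribeG t := by
  unfold tribeG
  apply div_le_div₀ (le_of_lt (two_zpow_pos _))
  · exact zpow_le_zpow_right₀ (by norm_num) (by omega)
  · exact_mod_cast Nat.lt_of_lt_of_le (by omega) ht
  · exact_mod_cast h

lemma f_le_tribeG {x : ℝ} {t : ℕ} (ht : 1 ≤ t) (hx : 0 < x)
    (hxt : x ≤ (2:ℝ) ^ (1 - (t:ℤ))) :
    x / (1 - Real.logb 2 x) ≤ tribeG t := by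
  have hlog2 : (0:ℝ) < Real.log 2 := Real.log_pos (by norm_num)
  have hlog : Real.logb 2 x ≤ 1 - (t:ℝ) := by
    rw [Real.logb, div_le_iff₀ hlog2]
    calc Real.log x ≤ Real.log ((2:ℝ) ^ (1 - (t:ℤ))) := Real.log_le_log hx hxt
      _ = (1 - (t:ℝ)) * Real.log 2 := by rw [Real.log_zpow]; push_cast; ring
  have ht' : (1:ℝ) ≤ (t:ℝ) := by exact_mod_cast ht
  have hden : (t:ℝ) ≤ 1 - Real.logb 2 x := by linarith
  have htpos : (0:ℝ) < t := by linarith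
  calc x / (1 - Real.logb 2 x) ≤ x / t := by
        apply div_le_div_of_nonneg_left hx.le htpos hden
    _ ≤ tribeG t := by
        unfold tribeG
        gcongr


lemma tribeG_sum_le (q : ℕ) : ∑ k ∈ Icc 1 q, tribeG k ≤ 2 * Real.log 2 := by
  have hs : HasSum (fun n : ℕ => ((1:ℝ)/2) ^ (n+1) / (n+1)) (Real.log 2) := by
    have h := Real.hasSum_pow_div_log_of_abs_lt_one
      (x := (1:ℝ)/2) (by rw [abs_of_pos] <;> norm_num)
    have : (1:ℝ) - 1/2 = 2⁻¹ := by norm_num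
    rw [this, Real.log_inv] at h
    simpa using h
  have hb : ∑ i ∈ Finset.range q, ((1:ℝ)/2) ^ (i+1) / (i+1) ≤ Real.log 2 :=
    sum_le_hasSum _ (fun i _ => by positivity) hs
  have he : ∑ k ∈ Icc 1 q, tribeG k
      = 2 * ∑ i ∈ Finset.range q, ((1:ℝ)/2) ^ (i+1) / (i+1) := by
    rw [Finset.mul_sum]
    rw [show Icc 1 q = Ico 1 (q+1) by rw [Finset.Ico_add_one_right_eq_Icc]]
    rw [Finset.sum_Ico_eq_sum_range]
    apply Finset.sum_congr (by simp)
    intro i _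
    unfold tribeG
    rw [two_zpow_one_sub]
    push_cast
    ring_nf
  rw [he]
  linarith

lemma geo_sum (p : ℕ) : ∀ q, p ≤ q →
    ∑ k ∈ Icc (p+1) q, ((1:ℝ)/2) ^ k = (1/2) ^ p - (1/2) ^ q := by
  intro q
  induction q with
  | zero => intro h; interval_cases p; simp
  | succ t ih =>
    intro h
    rcases Nat.lt_or_ge p (t+1) with hlt | hge
    · have hpt : p ≤ t := by omega
      rw [Finset.sum_Icc_succ_top (by omega), ih hpt]
      ring
    · have : p = t + 1 := by omega
      subst this
      simp

lemma tribeW_L1 (p q : ℕ) (hp : 1 ≤ p) :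
    ∑ k ∈ Icc 1 q, tribeG (max k p) ≤ tribeW p := by
  rcases eq_or_lt_of_le hp with hp1 | hp2
  · -- p = 1
    have : ∀ k ∈ Icc 1 q, tribeG (max k p) = tribeG k := by
      intro k hk
      rw [Finset.mem_Icc] at hk
      rw [max_eq_left (by omega)]
    rw [Finset.sum_congr rfl this, tribeW, if_pos hp1.symm]
    exact tribeG_sum_le q
  · -- 2 ≤ p
    have hp2' : 2 ≤ p := hp2
    have hWp : tribeW p = (2:ℝ) ^ (1 - (p:ℤ)) * (1 + 1/(p+1)) := by
      rw [tribeW, if_neg (by omega)]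
    have hApos : (0:ℝ) < 2 ^ (1 - (p:ℤ)) := two_zpow_pos _
    have hppos : (0:ℝ) < p := by exact_mod_cast Nat.lt_of_lt_of_le Nat.zero_lt_one hp
    rcases le_or_gt q p with hqp | hpq
    · -- q ≤ p : all maxes are p; sum = q * tribeG p ≤ 2^{1-p}
      have : ∀ k ∈ Icc 1 q, tribeG (max k p) = tribeG p := by
        intro k hk; rw [Finset.mem_Icc] at hk; rw [max_eq_right (by omega)]
      rw [Finset.sum_congr rfl this, Finset.sum_const, Nat.card_Icc]
      simp only [Nat.add_sub_cancel, nsmul_eq_mul]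
      have h1 : (q:ℝ) * tribeG p ≤ (p:ℝ) * tribeG p := by
        apply mul_le_mul_of_nonneg_right (by exact_mod_cast hqp)
        unfold tribeG; positivity
      have h2 : (p:ℝ) * tribeG p = (2:ℝ) ^ (1 - (p:ℤ)) := by
        unfold tribeG; field_simp
      have h3 : (2:ℝ) ^ (1 - (p:ℤ)) ≤ tribeW p := by
        rw [hWp]
        nlinarith [one_div_nonneg.mpr (by positivity : (0:ℝ) ≤ (p:ℝ)+1)]
      linarith
    · -- p < q : split at p
      have hsplit : ∑ k ∈ Ioc 0 p, tribeG (max k p) + ∑ k ∈ Ioc p q, tribeG (max k p)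
          = ∑ k ∈ Ioc 0 q, tribeG (max k p) :=
        Finset.sum_Ioc_consecutive _ (by omega) (by omega)
      have hIcc : Icc 1 q = Ioc 0 q := Finset.Icc_add_one_left_eq_Ioc 0 q
      rw [hIcc, ← hsplit]
      -- first part: each term = tribeG p, p terms
      have hfirst : ∑ k ∈ Ioc 0 p, tribeG (max k p) = (2:ℝ) ^ (1 - (p:ℤ)) := by
        have : ∀ k ∈ Ioc 0 p, tribeG (max k p) = tribeG p := by
          intro k hk; rw [Finset.mem_Ioc] at hk; rw [max_eq_right (by omega)]
        rw [Finset.sum_congr rfl this, Finset.sum_const, Nat.card_Ioc]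
        simp only [Nat.sub_zero, nsmul_eq_mul]
        unfold tribeG; field_simp
      -- second part
      have hsecond : ∑ k ∈ Ioc p q, tribeG (max k p)
          ≤ (2:ℝ) ^ (1 - (p:ℤ)) * (1/(p+1)) := by
        have hIoc : Ioc p q = Icc (p+1) q := (Finset.Icc_add_one_left_eq_Ioc p q).symm
        have hterm : ∀ k ∈ Icc (p+1) q, tribeG (max k p)
            ≤ (2/(p+1)) * ((1:ℝ)/2) ^ k := by
          intro k hk; rw [Finset.mem_Icc] at hk
          rw [max_eq_left (by omega)]
          unfold tribeG
          rw [two_zpow_one_sub]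
          rw [div_le_iff₀ (by exact_mod_cast Nat.lt_of_lt_of_le Nat.zero_lt_one (by omega : 1 ≤ k))]
          have hk1 : (p:ℝ) + 1 ≤ (k:ℝ) := by exact_mod_cast hk.1
          have : (2:ℝ)/((p:ℝ)+1) * ((1:ℝ)/2)^k * k = 2 * ((1:ℝ)/2)^k * ((k:ℝ)/((p:ℝ)+1)) := by
            ring
          rw [this]
          have hr : (1:ℝ) ≤ (k:ℝ)/((p:ℝ)+1) := (one_le_div (by positivity)).mpr hk1
          nlinarith [pow_pos (by norm_num : (0:ℝ) < 1/2) k]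
        calc ∑ k ∈ Ioc p q, tribeG (max k p)
            ≤ ∑ k ∈ Icc (p+1) q, (2/((p:ℝ)+1)) * ((1:ℝ)/2) ^ k := by
              rw [hIoc]; exact Finset.sum_le_sum hterm
          _ = (2/((p:ℝ)+1)) * (((1:ℝ)/2)^p - (1/2)^q) := by
              rw [← Finset.mul_sum, geo_sum p q (by omega)]
          _ ≤ (2/((p:ℝ)+1)) * ((1:ℝ)/2)^p := by
              apply mul_le_mul_of_nonneg_left _ (by positivity)
              nlinarith [pow_pos (by norm_num : (0:ℝ) < 1/2) q]
          _ = (2:ℝ) ^ (1 - (p:ℤ)) * (1/(p+1)) := by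
              rw [two_zpow_one_sub]; ring
      rw [hWp]
      have := hfirst
      nlinarith [hsecond]

lemma tribeW_L2 (q : ℕ) (hq : 2 ≤ q) :
    tribeG q + tribeW q ≤ (2:ℝ) ^ (2 - (q:ℤ)) := by
  have hW : tribeW q = (2:ℝ) ^ (1 - (q:ℤ)) * (1 + 1/(q+1)) := by
    rw [tribeW, if_neg (by omega)]
  have hA : (0:ℝ) < 2 ^ (1 - (q:ℤ)) := two_zpow_pos _
  have h2 : (2:ℝ) ^ (2 - (q:ℤ)) = 2 * 2 ^ (1 - (q:ℤ)) := by
    rw [show (2 - (q:ℤ)) = 1 + (1 - (q:ℤ)) by ring, zpow_add₀ (by norm_num : (2:ℝ) ≠ 0), zpow_one]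
  have hq' : (2:ℝ) ≤ (q:ℝ) := by exact_mod_cast hq
  have h1q : 1/(q:ℝ) ≤ 1/2 := by
    apply one_div_le_one_div_of_le <;> linarith
  have h1q1 : 1/((q:ℝ)+1) ≤ 1/3 := by
    apply one_div_le_one_div_of_le <;> linarith
  have hGq : tribeG q = (2:ℝ) ^ (1 - (q:ℤ)) * (1/q) := by
    unfold tribeG; field_simp
  rw [hW, h2, hGq]
  nlinarith [hA]

lemma tribeKey (p q : ℕ) (hp : 1 ≤ p) (hq : 1 ≤ q) (hpq : 2 ≤ p → 2 ≤ q) :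
    (∑ k ∈ Icc 1 q, tribeG (max k p)) + tribeG (max q p) + tribeW q
      ≤ tribeW p + (2:ℝ) ^ (2 - (q:ℤ)) := by
  rcases eq_or_lt_of_le hq with hq1 | hq2
  · -- q = 1, hence p = 1
    have hp1 : p = 1 := by
      by_contra h
      have := hpq (by omega)
      omega
    subst hp1
    subst hq1
    simp only [Finset.Icc_self, Finset.sum_singleton, max_self]
    have h1 : tribeG 1 = 1 := by unfold tribeG; norm_num
    have h2 : (2:ℝ) ^ (2 - ((1:ℕ):ℤ)) = 2 := by norm_num
    rw [h1, h2]
    linarith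
  · -- 2 ≤ q
    have h1 := tribeW_L1 p q hp
    have h2 := tribeW_L2 q hq2
    have h3 : tribeG (max q p) ≤ tribeG q := tribeG_anti hq (le_max_left _ _)
    linarith

/-- **Claim (tribe sizes capture the Talagrand sum).**
Let `1 ≥ a_1 ≥ ⋯ ≥ a_n > 0`. With `s_0 = 0`,
`k_i = min{ k ≥ 1 : s_{i-1} + k ≤ n and a_{s_{i-1}+k} > 2^{1-k} }`, `s_i = s_{i-1} + k_i`,
and `m` the largest index for which this minimum exists, we have
`∑_{i=1}^m 2^{-k_i} ≥ ((∑_{j=1}^n a_j / (1 - log₂ a_j)) - 2 ln 2) / 8`. -/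
theorem tribe_sizes_sum_lower_bound (n : ℕ) (hn : 1 ≤ n) (a : ℕ → ℝ)
    (ha : ∀ j, 1 ≤ j → j ≤ n → 0 < a j ∧ a j ≤ 1)
    (hmono : ∀ j, 1 ≤ j → j < n → a (j + 1) ≤ a j)
    (m : ℕ) (k s : ℕ → ℕ) (hs0 : s 0 = 0)
    (hk : ∀ i, 1 ≤ i → i ≤ m →
      IsLeast {t : ℕ | 1 ≤ t ∧ s (i - 1) + t ≤ n ∧
        (2 : ℝ) ^ (1 - (t : ℤ)) < a (s (i - 1) + t)} (k i))
    (hs : ∀ i, 1 ≤ i → i ≤ m → s i = s (i - 1) + k i)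
    (hm : ¬ ∃ t : ℕ, 1 ≤ t ∧ s m + t ≤ n ∧ (2 : ℝ) ^ (1 - (t : ℤ)) < a (s m + t)) :
    ∑ i ∈ Finset.Icc 1 m, (2 : ℝ) ^ (-(k i : ℤ)) ≥
      ((∑ j ∈ Finset.Icc 1 n, a j / (1 - Real.logb 2 (a j))) - 2 * Real.log 2) / 8 := by
  classical
  push_neg at hm
  set f : ℕ → ℝ := fun j => a j / (1 - Real.logb 2 (a j)) with hf
  set κ : ℕ → ℕ := fun i => if i = 0 then 2 else k i with hκ
  -- basic facts
  have hkn : ∀ i, 1 ≤ i → i ≤ m → s (i-1) + k i ≤ n := fun i h1 hi => (hk i h1 hi).1.2.1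
  have hsle : ∀ i, i ≤ m → s i ≤ n := by
    intro i hi
    rcases Nat.eq_zero_or_pos i with h0 | h1
    · subst h0; rw [hs0]; exact Nat.zero_le n
    · rw [hs i h1 hi]; exact hkn i h1 hi
  have hk2 : ∀ i, 1 ≤ i → i ≤ m → 2 ≤ k i := by
    intro i h1 hi
    obtain ⟨ht1, htn, hta⟩ := (hk i h1 hi).1
    by_contra h
    have hki : k i = 1 := by omega
    rw [hki] at hta htn
    have h1a := (ha _ (by omega) htn).2
    norm_num at hta
    linarith
  have hκ2 : ∀ i, i ≤ m → 2 ≤ κ i := by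
    intro i hi
    rcases Nat.eq_zero_or_pos i with h0 | h1
    · subst h0; simp [hκ]
    · simpa [hκ, Nat.pos_iff_ne_zero.mp h1] using hk2 i h1 hi
  have amono : ∀ j, 1 ≤ j → j ≤ n → ∀ j', 1 ≤ j' → j' ≤ j → a j ≤ a j' := by
    intro j
    induction j with
    | zero => omega
    | succ t ih =>
      intro h1 hn' j' h1' hj'
      rcases eq_or_lt_of_le hj' with rfl | hlt
      · exact le_refl _
      · have ht1 : 1 ≤ t := by omega
        have hstep : a (t+1) ≤ a t := hmono t ht1 (by omega)
        exact hstep.trans (ih ht1 (by omega) j' h1' (by omega))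
  have mid : ∀ i, 1 ≤ i → i ≤ m → ∀ t, 1 ≤ t → t < k i →
      a (s (i-1) + t) ≤ (2:ℝ) ^ (1 - (t:ℤ)) := by
    intro i h1 hi t ht1 htk
    by_contra h
    push_neg at h
    have := (hk i h1 hi).2 ⟨ht1, by have := hkn i h1 hi; omega, h⟩
    omega
  have run : ∀ i, 1 ≤ i → i + 1 ≤ m → 3 ≤ k i → 3 ≤ k (i+1) := by
    intro i h1 him h3
    by_contra h
    have hk2' := hk2 (i+1) (by omega) him
    have hki1 : k (i+1) = 2 := by omega
    have hmem := (hk (i+1) (by omega) him).1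
    simp only [Nat.add_sub_cancel, hki1] at hmem
    obtain ⟨-, hn2, hgt⟩ := hmem
    have hsi := hs i h1 (by omega)
    have hmid2 := mid i h1 (by omega) 2 (by norm_num) (by omega)
    have hle : a (s i + 2) ≤ a (s (i-1) + 2) :=
      amono _ (by omega) hn2 _ (by omega) (by omega)
    have hc : ((1:ℤ) - ((2:ℕ):ℤ)) = -1 := by norm_num
    rw [hc] at hgt hmid2
    linarith
  have cap : ∀ i, i ≤ m → ∀ j, s i < j → j ≤ n →
      a j ≤ (2:ℝ) ^ (1 - ((κ i - 1 : ℕ):ℤ)) := by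
    intro i hi j hj hjn
    rcases Nat.eq_zero_or_pos i with h0 | h1
    · subst h0
      have : κ 0 - 1 = 1 := by simp [hκ]
      rw [this]
      norm_num
      exact (ha j (by rw [hs0] at hj; omega) hjn).2
    · have hki := hk2 i h1 hi
      have hsi := hs i h1 hi
      have hmid := mid i h1 hi (k i - 1) (by omega) (by omega)
      have hκi : κ i = k i := by simp [hκ, Nat.pos_iff_ne_zero.mp h1]
      rw [hκi]
      calc a j ≤ a (s (i-1) + (k i - 1)) :=
            amono j (by omega) hjn _ (by omega) (by omega)
        _ ≤ (2:ℝ) ^ (1 - ((k i - 1 : ℕ):ℤ)) := hmid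
  -- reindexing
  have reidx : ∀ (s0 K : ℕ), ∑ j ∈ Finset.Ioc s0 (s0 + K), f j
      = ∑ t ∈ Finset.Icc 1 K, f (s0 + t) := by
    intro s0 K
    apply Finset.sum_nbij' (i := fun j => j - s0) (j := fun t => s0 + t)
    · intro x hx; rw [Finset.mem_Ioc] at hx; rw [Finset.mem_Icc]; omega
    · intro x hx; rw [Finset.mem_Icc] at hx; rw [Finset.mem_Ioc]; omega
    · intro x hx; rw [Finset.mem_Ioc] at hx; omega
    · intro x hx; rw [Finset.mem_Icc] at hx; omega
    · intro x hx; rw [Finset.mem_Ioc] at hx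
      congr 1; omega
  -- per-position bound
  have posbd : ∀ (i : ℕ), i ≤ m → ∀ t, 1 ≤ t → s i + t ≤ n →
      a (s i + t) ≤ (2:ℝ) ^ (1 - (t:ℤ)) →
      f (s i + t) ≤ tribeG (max t (κ i - 1)) := by
    intro i hi t ht1 htn hbd
    have hpos := (ha _ (by omega) htn).1
    have hcap := cap i hi (s i + t) (by omega) htn
    apply f_le_tribeG (by omega) hpos
    rcases le_total t (κ i - 1) with hc | hc
    · rw [max_eq_right hc]; exact hcap
    · rw [max_eq_left hc]; exact hbd
  -- main downward induction
  have main : ∀ d, d ≤ m →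
      ∑ j ∈ Finset.Ioc (s (m - d)) n, f j
        ≤ tribeW (κ (m - d) - 1)
          + 8 * ∑ l ∈ Finset.Icc (m - d + 1) m, (2:ℝ) ^ (-(k l : ℤ)) := by
    intro d
    induction d with
    | zero =>
      intro _
      simp only [Nat.sub_zero]
      have hempty : Finset.Icc (m + 1) m = ∅ := Finset.Icc_eq_empty (by omega)
      rw [hempty, Finset.sum_empty, mul_zero, add_zero]
      have hsm := hsle m le_rfl
      have hrw : n = s m + (n - s m) := by omega
      rw [hrw, reidx]
      calc ∑ t ∈ Finset.Icc 1 (n - s m), f (s m + t)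
          ≤ ∑ t ∈ Finset.Icc 1 (n - s m), tribeG (max t (κ m - 1)) := by
            apply Finset.sum_le_sum
            intro t ht
            rw [Finset.mem_Icc] at ht
            exact posbd m le_rfl t ht.1 (by omega) (hm t ht.1 (by omega))
        _ ≤ tribeW (κ m - 1) := tribeW_L1 _ _ (by have := hκ2 m le_rfl; omega)
    | succ d ih =>
      intro hdm
      set i := m - (d + 1) with hi
      have hii : m - d = i + 1 := by omega
      have h1i : 1 ≤ i + 1 := by omega
      have him : i + 1 ≤ m := by omega
      have IH := ih (by omega)
      rw [hii] at IH
      have hsi1 : s (i+1) = s i + k (i+1) := by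
        have := hs (i+1) h1i him
        simpa using this
      have hki1 := hk2 (i+1) h1i him
      set q := k (i+1) - 1 with hq
      have hkq : k (i+1) = q + 1 := by omega
      have hsleq := hsle (i+1) him
      have hsilen : s i + k (i+1) ≤ n := by omega
      -- split the tail sum
      have hsplit : ∑ j ∈ Finset.Ioc (s i) (s (i+1)), f j
            + ∑ j ∈ Finset.Ioc (s (i+1)) n, f j
          = ∑ j ∈ Finset.Ioc (s i) n, f j :=
        Finset.sum_Ioc_consecutive _ (by omega) hsleq
      rw [← hsplit]
      -- tribe sum
      have hmidI : ∀ t, 1 ≤ t → t < k (i+1) → a (s i + t) ≤ (2:ℝ) ^ (1 - (t:ℤ)) := by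
        intro t ht1 htk
        have := mid (i+1) h1i him t ht1 htk
        simpa using this
      have htr : ∑ j ∈ Finset.Ioc (s i) (s (i+1)), f j
          ≤ (∑ t ∈ Finset.Icc 1 q, tribeG (max t (κ i - 1)))
            + tribeG (max q (κ i - 1)) := by
        rw [hsi1, reidx, hkq, Finset.sum_Icc_succ_top (by omega)]
        have h1 : ∑ t ∈ Finset.Icc 1 q, f (s i + t)
            ≤ ∑ t ∈ Finset.Icc 1 q, tribeG (max t (κ i - 1)) := by
          apply Finset.sum_le_sum
          intro t ht
          rw [Finset.mem_Icc] at ht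
          exact posbd i (by omega) t ht.1 (by omega) (hmidI t ht.1 (by omega))
        have h2 : f (s i + (q + 1)) ≤ tribeG (max q (κ i - 1)) := by
          -- a (s i + (q+1)) ≤ a (s i + q) which has both bounds
          have hposlast := (ha (s i + (q+1)) (by omega) (by omega)).1
          have hlast : a (s i + (q+1)) ≤ a (s i + q) :=
            amono _ (by omega) (by omega) _ (by omega) (by omega)
          have hbq : a (s i + q) ≤ (2:ℝ) ^ (1 - (q:ℤ)) :=
            hmidI q (by omega) (by omega)
          have hcapq := cap i (by omega) (s i + q) (by omega) (by omega)
          apply f_le_tribeG (t := max q (κ i - 1)) (by have := hκ2 i (by omega); omega) hposlast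
          rcases le_total q (κ i - 1) with hc | hc
          · rw [max_eq_right hc]; exact hlast.trans hcapq
          · rw [max_eq_left hc]; exact hlast.trans hbq
        linarith
      -- key inequality
      have hκi1 : κ (i+1) - 1 = q := by simp [hκ, hq]
      have hpge : 1 ≤ κ i - 1 := by have := hκ2 i (by omega); omega
      have hqge : 1 ≤ q := by omega
      have hpq : 2 ≤ κ i - 1 → 2 ≤ q := by
        intro hp2
        have hi1 : 1 ≤ i := by
          by_contra h
          have : i = 0 := by omega
          rw [this] at hp2; simp [hκ] at hp2
        have hκi : κ i = k i := by simp [hκ, Nat.pos_iff_ne_zero.mp hi1]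
        rw [hκi] at hp2
        have := run i hi1 him (by omega)
        omega
      have hkey := tribeKey (κ i - 1) q hpge hqge hpq
      rw [hκi1] at IH
      -- combine sums over Icc
      have hsum : ∑ l ∈ Finset.Icc (i + 1) m, (2:ℝ) ^ (-(k l : ℤ))
          = (2:ℝ) ^ (-(k (i+1) : ℤ))
            + ∑ l ∈ Finset.Icc (i + 2) m, (2:ℝ) ^ (-(k l : ℤ)) := by
        rw [show Finset.Icc (i+2) m = Finset.Ioc (i+1) m from (Finset.Icc_add_one_left_eq_Ioc _ _)]
        rw [Finset.Icc_eq_cons_Ioc (by omega : i + 1 ≤ m), Finset.sum_cons]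
      have hpow : (2:ℝ) ^ (2 - (q:ℤ)) = 8 * (2:ℝ) ^ (-(k (i+1) : ℤ)) := by
        rw [hkq]
        push_cast
        rw [show (2 - (q:ℤ)) = 3 + (-((q:ℤ)+1)) by ring,
          zpow_add₀ (by norm_num : (2:ℝ) ≠ 0)]
        norm_num
      rw [hsum]
      have him2 : i + 1 + 1 = i + 2 := by omega
      rw [him2] at IH
      linarith
  -- conclude
  have h0 := main m le_rfl
  simp only [Nat.sub_self] at h0
  rw [hs0] at h0
  have hIoc : Finset.Ioc 0 n = Finset.Icc 1 n := (Finset.Icc_add_one_left_eq_Ioc 0 n).symm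
  rw [hIoc] at h0
  have hκ0 : κ 0 - 1 = 1 := by simp [hκ]
  rw [hκ0] at h0
  have hW1 : tribeW 1 = 2 * Real.log 2 := by rw [tribeW, if_pos rfl]
  rw [hW1] at h0
  have h01 : (0:ℕ) + 1 = 1 := rfl
  rw [h01] at h0
  rw [ge_iff_le, div_le_iff₀ (by norm_num : (0:ℝ) < 8)]
  have : ∑ j ∈ Finset.Icc 1 n, f j
      = ∑ j ∈ Finset.Icc 1 n, a j / (1 - Real.logb 2 (a j)) := rfl
  linarith [h0]
end

section
/- Let n be a positive integer and let 1 ≥ a_1 ≥ a_2 ≥ ⋯ ≥ a_n > 0 be a nonincreasing sequence of real numbers. Define s_0 = 0 and, recursively for i ≥ 1, k_i = min{ k ≥ 1 : s_{i-1} + k ≤ n and a_{s_{i-1}+k} > 2^{1−k} } and s_i = s_{i-1} + k_i, with m the largest index for which this minimum exists. Then 2 ≤ k_1 ≤ k_2 ≤ ⋯ ≤ k_m, i.e., the tribe sizes are nondecreasing and each is at least 2. -/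
/-- **The greedy tribe sizes are nondecreasing and at least 2.**
Let `1 ≥ a_1 ≥ ⋯ ≥ a_n > 0`. With `s_0 = 0`,
`k_i = min{ k ≥ 1 : s_{i-1} + k ≤ n and a_{s_{i-1}+k} > 2^{1-k} }`, `s_i = s_{i-1} + k_i`,
and `m` the largest index for which this minimum exists, we have
`2 ≤ k_1 ≤ k_2 ≤ ⋯ ≤ k_m`. -/
theorem tribe_sizes_monotone (n : ℕ) (hn : 1 ≤ n) (a : ℕ → ℝ)
    (ha : ∀ j, 1 ≤ j → j ≤ n → 0 < a j ∧ a j ≤ 1)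
    (hmono : ∀ j, 1 ≤ j → j < n → a (j + 1) ≤ a j)
    (m : ℕ) (k s : ℕ → ℕ) (hs0 : s 0 = 0)
    (hk : ∀ i, 1 ≤ i → i ≤ m →
      IsLeast {t : ℕ | 1 ≤ t ∧ s (i - 1) + t ≤ n ∧
        (2 : ℝ) ^ (1 - (t : ℤ)) < a (s (i - 1) + t)} (k i))
    (hs : ∀ i, 1 ≤ i → i ≤ m → s i = s (i - 1) + k i)
    (hm : ¬ ∃ t : ℕ, 1 ≤ t ∧ s m + t ≤ n ∧ (2 : ℝ) ^ (1 - (t : ℤ)) < a (s m + t)) :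
    (∀ i, 1 ≤ i → i ≤ m → 2 ≤ k i) ∧
    (∀ i, 1 ≤ i → i + 1 ≤ m → k i ≤ k (i + 1)) := by
  -- global monotonicity of a on [1, n]
  have amono : ∀ j j' : ℕ, 1 ≤ j → j ≤ j' → j' ≤ n → a j' ≤ a j := by
    intro j j' hj hjj'
    induction j' with
    | zero => omega
    | succ t ih =>
      intro hle
      rcases Nat.lt_or_ge j (t + 1) with h | h
      · have h1 : 1 ≤ t := by omega
        have := hmono t h1 (by omega)
        have := ih (by omega) (by omega)
        linarith
      · have : j = t + 1 := by omega
        simp [this]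
  constructor
  · intro i h1 h2
    obtain ⟨⟨ht1, ht2, ht3⟩, _⟩ := hk i h1 h2
    by_contra hlt
    have hki : k i = 1 := by omega
    rw [hki] at ht2 ht3
    have := (ha (s (i - 1) + 1) (by omega) ht2).2
    simp at ht3
    linarith
  · intro i h1 h2
    obtain ⟨_, hleast⟩ := hk i h1 (by omega)
    have hsi := hs i h1 (by omega)
    obtain ⟨hu1, hu2, hu3⟩ := (hk (i + 1) (by omega) h2).1
    simp only [Nat.add_sub_cancel] at hu1 hu2 hu3
    apply hleast
    refine ⟨hu1, by omega, ?_⟩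
    have ha' : a (s i + k (i + 1)) ≤ a (s (i - 1) + k (i + 1)) :=
      amono _ _ (by omega) (by omega) hu2
    linarith
end

section
/- Let k_1, ..., k_m be integers with k_i ≥ 2 for all i, and let 0 < μ ≤ 1 be a real number such that ∏_{i=1}^{m} (1 − 2^{−k_i}) ≤ 1 − μ. Let m_* = min{ 1 ≤ r ≤ m : ∏_{i=1}^{r} (1 − 2^{−k_i}) ≤ 1 − μ }. Then μ ≤ 1 − ∏_{i=1}^{m_*} (1 − 2^{−k_i}) < (3/4)·μ + 1/4. -/
/-- **The expectation of the truncated tribes product is close to `μ`.**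
Let `k_1, …, k_m ≥ 2` be integers and `0 < μ ≤ 1` with `∏_{i=1}^m (1 - 2^{-k_i}) ≤ 1 - μ`.
If `m_*` is the least `1 ≤ r ≤ m` with `∏_{i=1}^r (1 - 2^{-k_i}) ≤ 1 - μ`, then
`μ ≤ 1 - ∏_{i=1}^{m_*} (1 - 2^{-k_i}) < (3/4)μ + 1/4`. -/
theorem truncated_product_bounds (m : ℕ) (k : ℕ → ℕ)
    (hk : ∀ i, 1 ≤ i → i ≤ m → 2 ≤ k i)
    (μ : ℝ) (hμ0 : 0 < μ) (hμ1 : μ ≤ 1)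
    (hprod : ∏ i ∈ Finset.Icc 1 m, (1 - (2 : ℝ) ^ (-(k i : ℤ))) ≤ 1 - μ)
    (mstar : ℕ)
    (hmstar : IsLeast {r : ℕ | 1 ≤ r ∧ r ≤ m ∧
      ∏ i ∈ Finset.Icc 1 r, (1 - (2 : ℝ) ^ (-(k i : ℤ))) ≤ 1 - μ} mstar) :
    μ ≤ 1 - ∏ i ∈ Finset.Icc 1 mstar, (1 - (2 : ℝ) ^ (-(k i : ℤ))) ∧
    1 - ∏ i ∈ Finset.Icc 1 mstar, (1 - (2 : ℝ) ^ (-(k i : ℤ))) < 3 / 4 * μ + 1 / 4 := by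
  obtain ⟨⟨h1, hleM, hle⟩, hmin⟩ := hmstar
  refine ⟨by linarith, ?_⟩
  -- factor bound: for 1 ≤ i ≤ m, 3/4 ≤ 1 - 2^{-k i}
  have hfac : ∀ i, 1 ≤ i → i ≤ m → (3/4 : ℝ) ≤ 1 - (2 : ℝ) ^ (-(k i : ℤ)) := by
    intro i hi1 him
    have hki := hk i hi1 him
    have : (2 : ℝ) ^ (-(k i : ℤ)) ≤ (2 : ℝ) ^ (-(2 : ℤ)) := by
      apply zpow_le_zpow_right₀ (by norm_num)
      omega
    norm_num at this
    rw [zpow_neg, zpow_natCast]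
    linarith
  -- goal reduces to: 3/4 * (1 - μ) < ∏_{i=1}^{mstar} ...
  have key : (3/4 : ℝ) * (1 - μ) < ∏ i ∈ Finset.Icc 1 mstar, (1 - (2 : ℝ) ^ (-(k i : ℤ))) := by
    rcases Nat.lt_or_ge mstar 2 with h2 | h2
    · -- mstar = 1
      have : mstar = 1 := by omega
      subst this
      simp only [Finset.Icc_self, Finset.prod_singleton]
      have := hfac 1 le_rfl hleM
      nlinarith
    · -- mstar ≥ 2 : P(mstar-1) > 1-μ
      have hprev : 1 - μ < ∏ i ∈ Finset.Icc 1 (mstar - 1), (1 - (2 : ℝ) ^ (-(k i : ℤ))) := by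
        by_contra h
        push_neg at h
        have : mstar ≤ mstar - 1 := hmin ⟨by omega, by omega, h⟩
        omega
      have hsplit : ∏ i ∈ Finset.Icc 1 mstar, (1 - (2 : ℝ) ^ (-(k i : ℤ)))
          = (∏ i ∈ Finset.Icc 1 (mstar - 1), (1 - (2 : ℝ) ^ (-(k i : ℤ))))
            * (1 - (2 : ℝ) ^ (-(k mstar : ℤ))) := by
        have : mstar = (mstar - 1) + 1 := by omega
        rw [this, Finset.prod_Icc_succ_top (by omega)]
        rw [← this]
      have hfm := hfac mstar h1 hleM
      rw [hsplit]
      nlinarith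
  linarith
end

section
/- Let n be a positive integer and let 1 ≥ a_1 ≥ a_2 ≥ ⋯ ≥ a_n > 0 be a nonincreasing sequence of real numbers. Define s_0 = 0 and, recursively for i ≥ 1, k_i = min{ k ≥ 1 : s_{i-1} + k ≤ n and a_{s_{i-1}+k} > 2^{1−k} } and s_i = s_{i-1} + k_i, with m the largest index for which this minimum exists. Set α = (∑_{j=1}^n a_j/(1 − log₂ a_j)) − 2·ln 2. Then ∏_{i=1}^{m} (1 − 2^{−k_i}) ≤ exp(−α/8). In particular, for every real μ with 0 < μ ≤ 1 − exp(−α/8), there exists 1 ≤ r ≤ m such that ∏_{i=1}^{r} (1 − 2^{−k_i}) ≤ 1 − μ. -/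
open Finset

lemma tribe_geom (c : ℤ) (X : ℕ) : ∀ Y, X ≤ Y →
    ∑ j ∈ Finset.Ioc X Y, (2:ℝ)^(c - (j:ℤ)) = 2^(c-(X:ℤ)) - 2^(c-(Y:ℤ)) := by
  intro Y hXY
  induction Y, hXY using Nat.le_induction with
  | base => simp
  | succ Y hXY ih =>
    rw [Finset.sum_Ioc_succ_top hXY, ih]
    have h2 : (2:ℝ) ^ (c - (Y:ℤ)) = 2 ^ (c - ((Y:ℤ)+1)) * 2 := by
      rw [← zpow_add_one₀ (by norm_num : (2:ℝ) ≠ 0)]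
      ring_nf
    push_cast
    linarith

lemma tribe_f_le (x : ℝ) (hx : 0 < x) (c : ℕ) (hc : 1 ≤ c)
    (hxc : x ≤ (2:ℝ)^((1:ℤ) - c)) :
    x / (1 - Real.logb 2 x) ≤ (2:ℝ)^((1:ℤ)-c) / c := by
  have hlog : Real.logb 2 x ≤ ((1 - c : ℤ) : ℝ) := by
    rw [Real.logb_le_iff_le_rpow (by norm_num) hx, Real.rpow_intCast]
    exact hxc
  have hden : (c:ℝ) ≤ 1 - Real.logb 2 x := by push_cast at hlog ⊢; linarith
  have hcpos : (0:ℝ) < c := by exact_mod_cast hc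
  exact div_le_div₀ (by positivity) hxc hcpos hden

lemma tribe_piece_flat (a : ℕ → ℝ) (A c q : ℕ) (hq : 1 ≤ q) (hc : c ≤ A + q)
    (hb : ∀ j, A < j → j ≤ c → 0 < a j ∧ a j ≤ (2:ℝ)^((1:ℤ) - q)) :
    ∑ j ∈ Finset.Ioc A c, a j / (1 - Real.logb 2 (a j)) ≤ (2:ℝ)^((1:ℤ) - q) := by
  have h1 : ∑ j ∈ Finset.Ioc A c, a j / (1 - Real.logb 2 (a j))
      ≤ (Finset.Ioc A c).card • ((2:ℝ)^((1:ℤ)-q) / q) := by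
    apply Finset.sum_le_card_nsmul
    intro j hj
    rw [Finset.mem_Ioc] at hj
    exact tribe_f_le _ (hb j hj.1 hj.2).1 q hq (hb j hj.1 hj.2).2
  have hcard : (Finset.Ioc A c).card = c - A := Nat.card_Ioc A c
  rw [hcard, nsmul_eq_mul] at h1
  have hcA : ((c - A : ℕ) : ℝ) ≤ (q : ℝ) := by exact_mod_cast by omega
  have hqpos : (0:ℝ) < q := by exact_mod_cast hq
  have h2 : ((c - A : ℕ) : ℝ) * ((2:ℝ)^((1:ℤ)-q) / q) ≤ (q:ℝ) * ((2:ℝ)^((1:ℤ)-q) / q) := by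
    apply mul_le_mul_of_nonneg_right hcA
    positivity
  have h3 : (q:ℝ) * ((2:ℝ)^((1:ℤ)-q) / q) = (2:ℝ)^((1:ℤ)-q) := by
    field_simp
  linarith

lemma tribe_piece_geo (a : ℕ → ℝ) (A c Y : ℕ) (hAc : A ≤ c) (hcY : c ≤ Y)
    (hb : ∀ j, c < j → j ≤ Y → 0 < a j ∧ a j ≤ (2:ℝ)^((1:ℤ) + A - j) ∧ A + 2 ≤ j) :
    ∑ j ∈ Finset.Ioc c Y, a j / (1 - Real.logb 2 (a j)) ≤ (2:ℝ)^((A:ℤ) - c) := by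
  have key : ∀ j ∈ Finset.Ioc c Y, a j / (1 - Real.logb 2 (a j)) ≤ (2:ℝ)^((1:ℤ)+A-j) / 2 := by
    intro j hj
    rw [Finset.mem_Ioc] at hj
    obtain ⟨hpos, hle, hj2⟩ := hb j hj.1 hj.2
    have hjA : A ≤ j := by omega
    have hcast : ((1:ℤ) - ((j - A : ℕ) : ℤ)) = (1:ℤ) + A - j := by
      rw [Nat.cast_sub hjA]; ring
    have h1 : a j / (1 - Real.logb 2 (a j)) ≤ (2:ℝ)^((1:ℤ)+A-j) / ((j - A : ℕ) : ℝ) := by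
      have := tribe_f_le (a j) hpos (j - A) (by omega) (by rw [hcast]; exact hle)
      rwa [hcast] at this
    have h2 : (2:ℝ)^((1:ℤ)+A-j) / ((j - A : ℕ) : ℝ) ≤ (2:ℝ)^((1:ℤ)+A-j) / 2 := by
      apply div_le_div_of_nonneg_left (by positivity) (by norm_num)
      exact_mod_cast by omega
    linarith
  calc ∑ j ∈ Finset.Ioc c Y, a j / (1 - Real.logb 2 (a j))
      ≤ ∑ j ∈ Finset.Ioc c Y, (2:ℝ)^((1:ℤ)+A-j) / 2 := Finset.sum_le_sum key
    _ = (∑ j ∈ Finset.Ioc c Y, (2:ℝ)^(((1:ℤ)+A)-j)) / 2 := by rw [Finset.sum_div]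
    _ = ((2:ℝ)^(((1:ℤ)+A)-(c:ℤ)) - (2:ℝ)^(((1:ℤ)+A)-(Y:ℤ))) / 2 := by
        rw [tribe_geom ((1:ℤ)+A) c Y hcY]
    _ ≤ (2:ℝ)^(((1:ℤ)+A)-(c:ℤ)) / 2 := by
        have : (0:ℝ) ≤ (2:ℝ)^(((1:ℤ)+A)-(Y:ℤ)) := by positivity
        linarith
    _ = (2:ℝ)^((A:ℤ) - c) := by
        rw [show ((1:ℤ)+A)-(c:ℤ) = ((A:ℤ) - c) + 1 by ring, zpow_add_one₀ (by norm_num : (2:ℝ) ≠ 0)]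
        ring

lemma tribe_piece_log (a : ℕ → ℝ) (A Y : ℕ)
    (hb : ∀ j, A < j → j ≤ Y → 0 < a j ∧ a j ≤ (2:ℝ)^((1:ℤ) + A - j)) :
    ∑ j ∈ Finset.Ioc A Y, a j / (1 - Real.logb 2 (a j)) ≤ 2 * Real.log 2 := by
  have hterm : ∀ j ∈ Finset.Ioc A Y,
      a j / (1 - Real.logb 2 (a j)) ≤ 2 * ((1/2:ℝ)^(j - A) / (j - A : ℕ)) := by
    intro j hj
    rw [Finset.mem_Ioc] at hj
    obtain ⟨hpos, hle⟩ := hb j hj.1 hj.2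
    have hjA : A ≤ j := by omega
    have hcast : ((1:ℤ) - ((j - A : ℕ) : ℤ)) = (1:ℤ) + A - j := by
      rw [Nat.cast_sub hjA]; ring
    have h1 := tribe_f_le (a j) hpos (j - A) (by omega) (by rw [hcast]; exact hle)
    rw [hcast] at h1
    have h2 : (2:ℝ)^((1:ℤ)+A-j) = 2 * (1/2:ℝ)^(j-A) := by
      rw [show (1:ℤ)+A-j = 1 + (-((j-A:ℕ):ℤ)) by rw [Nat.cast_sub hjA]; ring,
        zpow_add₀ (by norm_num : (2:ℝ) ≠ 0), zpow_neg, zpow_natCast]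
      rw [show ((1:ℝ)/2) = 2⁻¹ by norm_num, inv_pow]
      norm_num
    rw [h2] at h1
    calc a j / (1 - Real.logb 2 (a j)) ≤ 2 * (1/2:ℝ)^(j-A) / ((j-A:ℕ):ℝ) := h1
      _ = 2 * ((1/2:ℝ)^(j - A) / (j - A : ℕ)) := by ring
  have hsum2 : ∑ j ∈ Finset.Ioc A Y, (1/2:ℝ)^(j - A) / ((j - A : ℕ):ℝ) ≤ Real.log 2 := by
    have hre : Finset.Ioc A Y = Finset.Ico (A+1) (Y+1) := (Finset.Ico_add_one_add_one_eq_Ioc A Y).symm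
    rw [hre, Finset.sum_Ico_eq_sum_range]
    have heq : ∀ i ∈ Finset.range (Y + 1 - (A+1)),
        (1/2:ℝ)^((A+1+i) - A) / (((A+1+i) - A : ℕ):ℝ) = (1/2:ℝ)^(i+1) / ((i:ℝ)+1) := by
      intro i _
      have : A + 1 + i - A = i + 1 := by omega
      rw [this]
      push_cast
      ring
    rw [Finset.sum_congr rfl heq]
    have hs := Real.hasSum_pow_div_log_of_abs_lt_one (x := 1/2) (by rw [abs_of_pos] <;> norm_num)
    have hlog : -Real.log (1 - 1/2) = Real.log 2 := by
      rw [show (1:ℝ) - 1/2 = 2⁻¹ by norm_num, Real.log_inv, neg_neg]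
    rw [hlog] at hs
    exact sum_le_hasSum _ (fun i _ => by positivity) hs
  calc ∑ j ∈ Finset.Ioc A Y, a j / (1 - Real.logb 2 (a j))
      ≤ ∑ j ∈ Finset.Ioc A Y, 2 * ((1/2:ℝ)^(j - A) / ((j - A : ℕ):ℝ)) := Finset.sum_le_sum hterm
    _ = 2 * ∑ j ∈ Finset.Ioc A Y, (1/2:ℝ)^(j - A) / ((j - A : ℕ):ℝ) := by
        rw [Finset.mul_sum]
    _ ≤ 2 * Real.log 2 := by linarith


noncomputable def tribePhi (K : ℕ) : ℝ := if K = 2 then 2 * Real.log 2 else 6 * (2:ℝ)^(-(K:ℤ))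

/-- **The product over all tribes is small, so `m_*` is well-defined.**
Let `1 ≥ a_1 ≥ ⋯ ≥ a_n > 0`. With `s_0 = 0`,
`k_i = min{ k ≥ 1 : s_{i-1} + k ≤ n and a_{s_{i-1}+k} > 2^{1-k} }`, `s_i = s_{i-1} + k_i`,
`m` the largest index for which this minimum exists, and
`α = (∑_{j=1}^n a_j / (1 - log₂ a_j)) - 2 ln 2`, we have
`∏_{i=1}^m (1 - 2^{-k_i}) ≤ exp(-α/8)`; in particular, for every `0 < μ ≤ 1 - exp(-α/8)`
there exists `1 ≤ r ≤ m` with `∏_{i=1}^r (1 - 2^{-k_i}) ≤ 1 - μ`. -/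
theorem prod_tribes_le_exp (n : ℕ) (hn : 1 ≤ n) (a : ℕ → ℝ)
    (ha : ∀ j, 1 ≤ j → j ≤ n → 0 < a j ∧ a j ≤ 1)
    (hmono : ∀ j, 1 ≤ j → j < n → a (j + 1) ≤ a j)
    (m : ℕ) (k s : ℕ → ℕ) (hs0 : s 0 = 0)
    (hk : ∀ i, 1 ≤ i → i ≤ m →
      IsLeast {t : ℕ | 1 ≤ t ∧ s (i - 1) + t ≤ n ∧
        (2 : ℝ) ^ (1 - (t : ℤ)) < a (s (i - 1) + t)} (k i))
    (hs : ∀ i, 1 ≤ i → i ≤ m → s i = s (i - 1) + k i)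
    (hm : ¬ ∃ t : ℕ, 1 ≤ t ∧ s m + t ≤ n ∧ (2 : ℝ) ^ (1 - (t : ℤ)) < a (s m + t))
    (α : ℝ) (hα : α = (∑ j ∈ Finset.Icc 1 n, a j / (1 - Real.logb 2 (a j))) - 2 * Real.log 2) :
    (∏ i ∈ Finset.Icc 1 m, (1 - (2 : ℝ) ^ (-(k i : ℤ)))) ≤ Real.exp (-α / 8) ∧
    ∀ μ : ℝ, 0 < μ → μ ≤ 1 - Real.exp (-α / 8) →
      ∃ r, 1 ≤ r ∧ r ≤ m ∧ (∏ i ∈ Finset.Icc 1 r, (1 - (2 : ℝ) ^ (-(k i : ℤ)))) ≤ 1 - μ := by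
  -- basic facts
  have hk2 : ∀ i, 1 ≤ i → i ≤ m → 2 ≤ k i := by
    intro i h1 h2
    obtain ⟨⟨hk1, hkn, hka⟩, -⟩ := hk i h1 h2
    by_contra hcon
    have hki : k i = 1 := by omega
    rw [hki] at hka hkn
    have h1le := (ha _ (by omega) hkn).2
    norm_num at hka
    linarith
  have hslen : ∀ i, 1 ≤ i → i ≤ m → s (i-1) + k i ≤ n := fun i h1 h2 => (hk i h1 h2).1.2.1
  have hsin : ∀ i, i ≤ m → s i ≤ n := by
    intro i hi
    rcases Nat.eq_zero_or_pos i with h0 | h1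
    · subst h0; rw [hs0]; omega
    · rw [hs i h1 hi]; exact hslen i h1 hi
  have hspos : ∀ i, 1 ≤ i → i ≤ m → 2 ≤ s i := by
    intro i h1 h2
    rw [hs i h1 h2]
    have := hk2 i h1 h2
    omega
  have amono : ∀ x y, 1 ≤ x → x ≤ y → y ≤ n → a y ≤ a x := by
    intro x y h1 hxy hyn
    induction y, hxy using Nat.le_induction with
    | base => exact le_refl _
    | succ y hxy ih =>
      calc a (y+1) ≤ a y := hmono y (by omega) (by omega)
        _ ≤ a x := ih (by omega)
  have apos : ∀ j, 1 ≤ j → j ≤ n → 0 < a j := fun j h1 h2 => (ha j h1 h2).1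
  have within : ∀ i, 1 ≤ i → i ≤ m → ∀ t, 1 ≤ t → t < k i →
      a (s (i-1) + t) ≤ (2:ℝ)^((1:ℤ) - t) := by
    intro i h1 h2 t ht1 ht2
    by_contra hcon
    push_neg at hcon
    have hmem : t ∈ {t : ℕ | 1 ≤ t ∧ s (i - 1) + t ≤ n ∧
        (2 : ℝ) ^ (1 - (t : ℤ)) < a (s (i - 1) + t)} :=
      ⟨ht1, by have := hslen i h1 h2; omega, hcon⟩
    have := (hk i h1 h2).2 hmem
    omega
  have wlast : ∀ i, 1 ≤ i → i ≤ m → a (s i) ≤ (2:ℝ)^((2:ℤ) - k i) := by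
    intro i h1 h2
    have h2k := hk2 i h1 h2
    have hsi := hs i h1 h2
    have step : a (s i) ≤ a (s (i-1) + (k i - 1)) := by
      apply amono _ _ (by omega) (by omega) (hsin i h2)
    have hw := within i h1 h2 (k i - 1) (by omega) (by omega)
    have hcast : (1:ℤ) - ((k i - 1 : ℕ) : ℤ) = (2:ℤ) - k i := by
      rw [Nat.cast_sub (by omega)]; push_cast; ring
    rw [hcast] at hw
    linarith
  have cross : ∀ i, 1 ≤ i → i ≤ m → ∀ j, s i < j → j ≤ n →
      a j ≤ (2:ℝ)^((2:ℤ) - k i) := by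
    intro i h1 h2 j hj hjn
    have := amono (s i) j (by have := hspos i h1 h2; omega) (le_of_lt hj) hjn
    exact le_trans this (wlast i h1 h2)
  have kmono : ∀ i, 2 ≤ i → i ≤ m → k (i-1) ≤ k i := by
    intro i h2 hm'
    obtain ⟨⟨hk1, hkn, hka⟩, -⟩ := hk i (by omega) hm'
    have hsprev : s (i-1) = s (i-1-1) + k (i-1) := hs (i-1) (by omega) (by omega)
    have hc := cross (i-1) (by omega) (by omega) (s (i-1) + k i)
      (by omega) hkn
    have hlt := lt_of_lt_of_le hka hc
    have hexp : (1:ℤ) - k i < (2:ℤ) - k (i-1) :=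
      (zpow_lt_zpow_iff_right₀ (by norm_num : (1:ℝ) < 2)).mp hlt
    omega
  have tailb : ∀ j, s m < j → j ≤ n → a j ≤ (2:ℝ)^((1:ℤ) + (s m) - j) := by
    intro j hj hjn
    by_contra hcon
    push_neg at hcon
    apply hm
    refine ⟨j - s m, by omega, by omega, ?_⟩
    have h1 : s m + (j - s m) = j := by omega
    have h2 : (1:ℤ) - ((j - s m : ℕ) : ℤ) = (1:ℤ) + (s m) - j := by
      rw [Nat.cast_sub (by omega)]; ring
    rw [h1, h2]
    exact hcon
  -- zpow arithmetic helpers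
  have z4 : ∀ K : ℕ, 2 ≤ K → (2:ℝ)^((1:ℤ) - ((K - 1 : ℕ) : ℤ)) = 4 * (2:ℝ)^(-(K:ℤ)) := by
    intro K hK
    rw [show ((K - 1 : ℕ) : ℤ) = (K:ℤ) - 1 by omega, show (1:ℤ) - ((K:ℤ) - 1) = 2 + (-(K:ℤ)) by ring,
      zpow_add₀ (by norm_num : (2:ℝ) ≠ 0)]
    norm_num
  have z2 : ∀ K : ℕ, 2 ≤ K → (2:ℝ)^(-((K - 1 : ℕ) : ℤ)) = 2 * (2:ℝ)^(-(K:ℤ)) := by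
    intro K hK
    rw [show ((K - 1 : ℕ) : ℤ) = (K:ℤ) - 1 by omega, show -((K:ℤ) - 1) = 1 + (-(K:ℤ)) by ring,
      zpow_add₀ (by norm_num : (2:ℝ) ≠ 0)]
    norm_num
  have z2' : ∀ K : ℕ, (2:ℝ)^((1:ℤ) - (K:ℤ)) = 2 * (2:ℝ)^(-(K:ℤ)) := by
    intro K
    rw [show (1:ℤ) - (K:ℤ) = 1 + (-(K:ℤ)) by ring, zpow_add₀ (by norm_num : (2:ℝ) ≠ 0)]
    norm_num
  have zpos : ∀ c : ℤ, (0:ℝ) < (2:ℝ)^c := fun c => zpow_pos (by norm_num) c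
  -- the tail bound
  have tailcase : ∑ j ∈ Finset.Ioc (s m) n, a j / (1 - Real.logb 2 (a j))
      ≤ tribePhi (if m = 0 then 2 else k m) := by
    by_cases hcase : (if m = 0 then 2 else k m) = 2
    · rw [hcase]
      unfold tribePhi
      simp only [if_pos rfl]
      apply tribe_piece_log a (s m) n
      intro j hj1 hj2
      exact ⟨apos j (by omega) hj2, tailb j hj1 hj2⟩
    · -- here m ≥ 1 and k m ≥ 3
      have hm1 : 1 ≤ m := by
        by_contra h; push_neg at h
        have : m = 0 := by omega
        simp [this] at hcase
      rw [if_neg (by omega)] at hcase ⊢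
      have hK3 : 3 ≤ k m := by have := hk2 m hm1 le_rfl; omega
      unfold tribePhi
      rw [if_neg (by omega)]
      set q : ℕ := k m - 1 with hq
      have hq2 : 2 ≤ q := by omega
      have hcrossm : ∀ j, s m < j → j ≤ n → a j ≤ (2:ℝ)^((1:ℤ) - (q:ℤ)) := by
        intro j hj1 hj2
        have := cross m hm1 le_rfl j hj1 hj2
        rwa [show (1:ℤ) - (q:ℤ) = (2:ℤ) - k m by rw [hq]; push_cast [Nat.cast_sub (by omega : 1 ≤ k m)]; ring]
      rcases le_or_gt (s m + q) n with hcn | hcn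
      · have hsplit := Finset.sum_Ioc_consecutive
          (fun j => a j / (1 - Real.logb 2 (a j))) (by omega : s m ≤ s m + q) hcn
        rw [← hsplit]
        have hp1 : ∑ j ∈ Finset.Ioc (s m) (s m + q), a j / (1 - Real.logb 2 (a j))
            ≤ (2:ℝ)^((1:ℤ) - (q:ℤ)) := by
          apply tribe_piece_flat a (s m) (s m + q) q (by omega) le_rfl
          intro j hj1 hj2
          exact ⟨apos j (by omega) (by omega), hcrossm j hj1 (by omega)⟩
        have hp2 : ∑ j ∈ Finset.Ioc (s m + q) n, a j / (1 - Real.logb 2 (a j))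
            ≤ (2:ℝ)^(((s m : ℕ):ℤ) - ((s m + q : ℕ):ℤ)) := by
          apply tribe_piece_geo a (s m) (s m + q) n (by omega) hcn
          intro j hj1 hj2
          exact ⟨apos j (by omega) hj2, tailb j (by omega) hj2, by omega⟩
        have he1 : (2:ℝ)^((1:ℤ) - (q:ℤ)) = 4 * (2:ℝ)^(-(k m:ℤ)) := by
          rw [hq] at *
          exact z4 (k m) (by omega)
        have he2 : (2:ℝ)^(((s m : ℕ):ℤ) - ((s m + q : ℕ):ℤ)) = 2 * (2:ℝ)^(-(k m:ℤ)) := by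
          rw [show ((s m : ℕ):ℤ) - ((s m + q : ℕ):ℤ) = -((q:ℕ):ℤ) by push_cast; ring]
          rw [hq]
          exact z2 (k m) (by omega)
        rw [he1] at hp1
        rw [he2] at hp2
        linarith
      · have hp1 : ∑ j ∈ Finset.Ioc (s m) n, a j / (1 - Real.logb 2 (a j))
            ≤ (2:ℝ)^((1:ℤ) - (q:ℤ)) := by
          apply tribe_piece_flat a (s m) n q (by omega) (by omega)
          intro j hj1 hj2
          exact ⟨apos j (by omega) hj2, hcrossm j hj1 hj2⟩
        have he1 : (2:ℝ)^((1:ℤ) - (q:ℤ)) = 4 * (2:ℝ)^(-(k m:ℤ)) := by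
          rw [hq]; exact z4 (k m) (by omega)
        rw [he1] at hp1
        have := zpos (-(k m:ℤ))
        linarith
  -- the tribe step bound
  have tribestep : ∀ i, 1 ≤ i → i ≤ m →
      (∑ j ∈ Finset.Ioc (s (i-1)) (s i), a j / (1 - Real.logb 2 (a j))) + tribePhi (k i)
      ≤ tribePhi (if i = 1 then 2 else k (i-1)) + 8 * (2:ℝ)^(-(k i : ℤ)) := by
    intro i h1 him
    have hK2 : 2 ≤ k i := hk2 i h1 him
    have hsi : s i = s (i-1) + k i := hs i h1 him
    have hAn : s (i-1) + k i ≤ n := hslen i h1 him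
    set A := s (i-1) with hA
    set K := k i with hKdef
    -- decompose off the last element
    have hdec : ∑ j ∈ Finset.Ioc A (s i), a j / (1 - Real.logb 2 (a j))
        = (∑ j ∈ Finset.Ioc A (A + (K-1)), a j / (1 - Real.logb 2 (a j)))
          + a (A + K) / (1 - Real.logb 2 (a (A + K))) := by
      rw [hsi, show A + K = (A + (K-1)) + 1 by omega]
      rw [Finset.sum_Ioc_succ_top (by omega : A ≤ A + (K-1))]
    have hlast : a (A + K) / (1 - Real.logb 2 (a (A + K))) ≤ (2:ℝ)^((2:ℤ)-(K:ℤ)) / ((K-1 : ℕ):ℝ) := by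
      have hw := wlast i h1 him
      rw [hsi] at hw
      have hcast : (1:ℤ) - ((K - 1 : ℕ) : ℤ) = (2:ℤ) - (K:ℤ) := by
        rw [Nat.cast_sub (by omega)]; ring
      have := tribe_f_le (a (A+K)) (apos _ (by omega) (by omega)) (K-1) (by omega)
        (by rw [hcast]; exact hw)
      rwa [hcast] at this
    have hwb : ∀ j, A < j → j ≤ A + (K-1) → a j ≤ (2:ℝ)^((1:ℤ) + (A:ℤ) - (j:ℤ)) := by
      intro j hj1 hj2
      have hw := within i h1 him (j - A) (by omega) (by omega)
      rw [show A + (j - A) = j by omega] at hw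
      rwa [show (1:ℤ) - ((j - A : ℕ):ℤ) = (1:ℤ) + (A:ℤ) - (j:ℤ) by
        rw [Nat.cast_sub (by omega)]; ring] at hw
    by_cases hcase : (if i = 1 then 2 else k (i-1)) = 2
    · rw [hcase]
      -- q = 1 case
      by_cases hKK : K = 2
      · -- both 2
        have hp1 : ∑ j ∈ Finset.Ioc A (A + (K-1)), a j / (1 - Real.logb 2 (a j))
            ≤ (2:ℝ)^((1:ℤ) - ((1:ℕ):ℤ)) := by
          apply tribe_piece_flat a A (A + (K-1)) 1 le_rfl (by omega)
          intro j hj1 hj2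
          refine ⟨apos j (by omega) (by omega), ?_⟩
          have := (ha j (by omega) (by omega)).2
          simpa using this
        have hlast2 : a (A + K) / (1 - Real.logb 2 (a (A + K))) ≤ 1 := by
          have h4 : (2:ℝ)^((2:ℤ)-(K:ℤ)) / ((K-1 : ℕ):ℝ) = 1 := by
            rw [hKK]; norm_num
          rw [h4] at hlast
          exact hlast
        have e1 : (2:ℝ)^((1:ℤ) - ((1:ℕ):ℤ)) = 1 := by norm_num
        rw [e1] at hp1
        have e2 : (8:ℝ) * (2:ℝ)^(-(K:ℤ)) = 2 := by
          rw [hKK]; norm_num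
        have e3 : tribePhi K = tribePhi 2 := by rw [hKK]
        rw [hdec, e2, e3]
        linarith
      · -- K ≥ 3, q = 1 : use the log-series bound
        have hK3 : 3 ≤ K := by omega
        have hp1 : ∑ j ∈ Finset.Ioc A (A + (K-1)), a j / (1 - Real.logb 2 (a j))
            ≤ 2 * Real.log 2 := by
          apply tribe_piece_log a A (A + (K-1))
          intro j hj1 hj2
          exact ⟨apos j (by omega) (by omega), hwb j hj1 hj2⟩
        have hlast2 : a (A + K) / (1 - Real.logb 2 (a (A + K))) ≤ 2 * (2:ℝ)^(-(K:ℤ)) := by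
          have h2 : (2:ℝ)^((2:ℤ)-(K:ℤ)) / ((K-1 : ℕ):ℝ) ≤ (2:ℝ)^((2:ℤ)-(K:ℤ)) / 2 := by
            apply div_le_div_of_nonneg_left (le_of_lt (zpos _)) (by norm_num)
            exact_mod_cast by omega
          have h3 : (2:ℝ)^((2:ℤ)-(K:ℤ)) / 2 = 2 * (2:ℝ)^(-(K:ℤ)) := by
            have h5 : (2:ℝ)^((2:ℤ)-(K:ℤ)) = 4 * (2:ℝ)^(-(K:ℤ)) := by
              rw [show (2:ℤ)-(K:ℤ) = 2 + (-(K:ℤ)) by ring, zpow_add₀ (by norm_num : (2:ℝ) ≠ 0)]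
              norm_num
            rw [h5]; ring
          linarith
        rw [hdec]
        unfold tribePhi
        rw [if_neg (by omega), if_pos rfl]
        linarith
    · -- q = k (i-1) - 1 ≥ 2 case; in particular i ≥ 2
      have hi2 : 2 ≤ i := by
        by_contra h; push_neg at h
        have : i = 1 := by omega
        simp [this] at hcase
      rw [if_neg (by omega)] at hcase ⊢
      have hKp3 : 3 ≤ k (i-1) := by have := hk2 (i-1) (by omega) (by omega); omega
      have hKm : k (i-1) ≤ K := kmono i hi2 him
      have hK3 : 3 ≤ K := by omega
      set q : ℕ := k (i-1) - 1 with hqdef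
      have hq2 : 2 ≤ q := by omega
      have hcross' : ∀ j, A < j → j ≤ n → a j ≤ (2:ℝ)^((1:ℤ) - (q:ℤ)) := by
        intro j hj1 hj2
        have hsprev : s (i-1) = s (i-1-1) + k (i-1) := hs (i-1) (by omega) (by omega)
        have := cross (i-1) (by omega) (by omega) j (by omega) hj2
        rwa [show (1:ℤ) - (q:ℤ) = (2:ℤ) - (k (i-1):ℤ) by
          rw [hqdef]; push_cast [Nat.cast_sub (by omega : 1 ≤ k (i-1))]; ring]
      -- split the main part at A + q
      have hsplit := Finset.sum_Ioc_consecutive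
        (fun j => a j / (1 - Real.logb 2 (a j)))
        (by omega : A ≤ A + q) (by omega : A + q ≤ A + (K-1))
      have hp1 : ∑ j ∈ Finset.Ioc A (A + q), a j / (1 - Real.logb 2 (a j))
          ≤ (2:ℝ)^((1:ℤ) - (q:ℤ)) := by
        apply tribe_piece_flat a A (A + q) q (by omega) le_rfl
        intro j hj1 hj2
        exact ⟨apos j (by omega) (by omega), hcross' j hj1 (by omega)⟩
      have hp2 : ∑ j ∈ Finset.Ioc (A + q) (A + (K-1)), a j / (1 - Real.logb 2 (a j))
          ≤ (2:ℝ)^(((A:ℕ):ℤ) - ((A + q : ℕ):ℤ)) := by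
        apply tribe_piece_geo a A (A + q) (A + (K-1)) (by omega) (by omega)
        intro j hj1 hj2
        exact ⟨apos j (by omega) (by omega), hwb j (by omega) hj2, by omega⟩
      have hlast2 : a (A + K) / (1 - Real.logb 2 (a (A + K))) ≤ 2 * (2:ℝ)^(-(K:ℤ)) := by
        have h2 : (2:ℝ)^((2:ℤ)-(K:ℤ)) / ((K-1 : ℕ):ℝ) ≤ (2:ℝ)^((2:ℤ)-(K:ℤ)) / 2 := by
          apply div_le_div_of_nonneg_left (le_of_lt (zpos _)) (by norm_num)
          exact_mod_cast by omega
        have h3 : (2:ℝ)^((2:ℤ)-(K:ℤ)) / 2 = 2 * (2:ℝ)^(-(K:ℤ)) := by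
          have h5 : (2:ℝ)^((2:ℤ)-(K:ℤ)) = 4 * (2:ℝ)^(-(K:ℤ)) := by
            rw [show (2:ℤ)-(K:ℤ) = 2 + (-(K:ℤ)) by ring, zpow_add₀ (by norm_num : (2:ℝ) ≠ 0)]
            norm_num
          rw [h5]; ring
        linarith
      have he1 : (2:ℝ)^((1:ℤ) - (q:ℤ)) = 4 * (2:ℝ)^(-(k (i-1):ℤ)) := by
        rw [hqdef]; exact z4 (k (i-1)) (by omega)
      have he2 : (2:ℝ)^(((A:ℕ):ℤ) - ((A + q : ℕ):ℤ)) = 2 * (2:ℝ)^(-(k (i-1):ℤ)) := by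
        rw [show ((A:ℕ):ℤ) - ((A + q : ℕ):ℤ) = -((q:ℕ):ℤ) by push_cast; ring, hqdef]
        exact z2 (k (i-1)) (by omega)
      rw [hdec, ← hsplit]
      unfold tribePhi
      rw [if_neg (by omega), if_neg (by omega)]
      rw [he1] at hp1
      rw [he2] at hp2
      linarith
  -- the key downward induction
  have key : ∀ d i, 1 ≤ i → i + d = m + 1 →
      ∑ j ∈ Finset.Ioc (s (i-1)) n, a j / (1 - Real.logb 2 (a j))
        ≤ tribePhi (if i = 1 then 2 else k (i-1))
          + 8 * ∑ j ∈ Finset.Icc i m, (2:ℝ)^(-(k j : ℤ)) := by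
    intro d
    induction d with
    | zero =>
      intro i h1 he
      have hieq : i = m + 1 := by omega
      subst hieq
      rw [Finset.Icc_eq_empty (by omega), Finset.sum_empty, mul_zero, add_zero]
      have : (m + 1) - 1 = m := by omega
      rw [this]
      have hif : (if m + 1 = 1 then 2 else k m) = (if m = 0 then 2 else k m) := by
        by_cases h : m = 0 <;> simp [h]
      rw [hif]
      exact tailcase
    | succ d ih =>
      intro i h1 he
      have him : i ≤ m := by omega
      have hsi : s i = s (i-1) + k i := hs i h1 him
      have hsplit := Finset.sum_Ioc_consecutive
        (fun j => a j / (1 - Real.logb 2 (a j)))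
        (by omega : s (i-1) ≤ s i) (hsin i him)
      have h2 := ih (i+1) (by omega) (by omega)
      have hsucc : (i+1) - 1 = i := by omega
      rw [hsucc] at h2
      have hif2 : (if i + 1 = 1 then 2 else k i) = k i := by
        rw [if_neg (by omega)]
      rw [hif2] at h2
      have h3 := tribestep i h1 him
      have hIcc : ∑ j ∈ Finset.Icc i m, (2:ℝ)^(-(k j : ℤ))
          = (2:ℝ)^(-(k i : ℤ)) + ∑ j ∈ Finset.Icc (i+1) m, (2:ℝ)^(-(k j : ℤ)) := by
        rw [show Finset.Icc i m = insert i (Finset.Icc (i+1) m) by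
          ext x; simp only [Finset.mem_insert, Finset.mem_Icc]; omega]
        rw [Finset.sum_insert (by simp)]
      rw [← hsplit, hIcc]
      linarith
  -- total bound
  have total : ∑ j ∈ Finset.Icc 1 n, a j / (1 - Real.logb 2 (a j))
      ≤ 2 * Real.log 2 + 8 * ∑ j ∈ Finset.Icc 1 m, (2:ℝ)^(-(k j : ℤ)) := by
    have := key m 1 le_rfl (by omega)
    rw [show (1:ℕ) - 1 = 0 from rfl, hs0, if_pos rfl] at this
    unfold tribePhi at this
    rw [if_pos rfl] at this
    rwa [show Finset.Icc 1 n = Finset.Ioc 0 n from Finset.Icc_add_one_left_eq_Ioc 0 n]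
  have halpha : α ≤ 8 * ∑ j ∈ Finset.Icc 1 m, (2:ℝ)^(-(k j : ℤ)) := by
    rw [hα]; linarith
  have hprod : (∏ i ∈ Finset.Icc 1 m, (1 - (2 : ℝ) ^ (-(k i : ℤ)))) ≤ Real.exp (-α / 8) := by
    have h1 : (∏ i ∈ Finset.Icc 1 m, (1 - (2 : ℝ) ^ (-(k i : ℤ))))
        ≤ ∏ i ∈ Finset.Icc 1 m, Real.exp (-(2:ℝ)^(-(k i : ℤ))) := by
      apply Finset.prod_le_prod
      · intro i _
        have : (2:ℝ)^(-(k i : ℤ)) ≤ 1 := zpow_le_one_of_nonpos₀ (by norm_num) (by omega)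
        linarith
      · intro i _
        have := Real.add_one_le_exp (-(2:ℝ)^(-(k i : ℤ)))
        linarith
    have h2 : ∏ i ∈ Finset.Icc 1 m, Real.exp (-(2:ℝ)^(-(k i : ℤ)))
        = Real.exp (∑ i ∈ Finset.Icc 1 m, -(2:ℝ)^(-(k i : ℤ))) := (Real.exp_sum _ _).symm
    have h3 : Real.exp (∑ i ∈ Finset.Icc 1 m, -(2:ℝ)^(-(k i : ℤ))) ≤ Real.exp (-α / 8) := by
      apply Real.exp_le_exp.mpr
      rw [Finset.sum_neg_distrib]
      linarith
    calc (∏ i ∈ Finset.Icc 1 m, (1 - (2 : ℝ) ^ (-(k i : ℤ))))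
        ≤ ∏ i ∈ Finset.Icc 1 m, Real.exp (-(2:ℝ)^(-(k i : ℤ))) := h1
      _ = Real.exp (∑ i ∈ Finset.Icc 1 m, -(2:ℝ)^(-(k i : ℤ))) := h2
      _ ≤ Real.exp (-α / 8) := h3
  refine ⟨hprod, ?_⟩
  intro μ hμ0 hμ1
  rcases Nat.eq_zero_or_pos m with hm0 | hm1
  · exfalso
    subst hm0
    rw [Finset.Icc_eq_empty (by norm_num), Finset.prod_empty] at hprod
    linarith
  · exact ⟨m, hm1, le_rfl, le_trans hprod (by linarith)⟩
end
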